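/- arXiv:1702.04824 — 8 statements merged into one kernel-verified Lean document; each statement's English description precedes it below -/
import Mathlib

section
/- Assume hypothesis (H). Given ε' > 0 and a compact set Ω ⊂ ℝ^{n+m}, there exist finitely many vectors w₁, …, w_ν ∈ ℝᵐ such that the following holds: for every (q,u) ∈ Ω and every p ∈ Γ(q,u) with |p| ≤ 1, there exist coefficients θ₁, …, θ_ν ∈ [0,1] with Σ_{i=1}^ν θ_i = 1 and | p − A(q,u) · Σ_{i=1}^ν θ_i ( w_iᵀ D(q,u) w_i ) | ≤ ε'. -/
open MeasureTheory Set

noncomputable section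

/-- Euclidean space `ℝᵏ`. -/
abbrev Euc (k : ℕ) : Type := EuclideanSpace ℝ (Fin k)

/-- `f` is absolutely continuous on `[a,b]` with (a.e.) derivative `f'`. -/
def AbsCont {F : Type*} [NormedAddCommGroup F] [NormedSpace ℝ F] (a b : ℝ)
    (f f' : ℝ → F) : Prop :=
  IntegrableOn f' (Icc a b) ∧ ∀ t ∈ Icc a b, f t = f a + ∫ s in a..t, f' s

/-- The cone `Γ(q,u)`: closed convex hull of `{A(q,u)(wᵀD(q,u)w) : w ∈ ℝᵐ}`. -/
def Gamma {n m : ℕ} (A : Euc n × Euc m → Euc n →L[ℝ] Euc n)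
    (D : Euc n × Euc m → Euc m →L[ℝ] Euc m →L[ℝ] Euc n)
    (z : Euc n × Euc m) : Set (Euc n) :=
  closure (convexHull ℝ {p : Euc n | ∃ w : Euc m, p = A z (D z w w)})

/-- Hypothesis (H). -/
structure HypH {n m : ℕ}
    (A : Euc n × Euc m → Euc n →L[ℝ] Euc n)
    (B : Euc n × Euc m → Euc n →L[ℝ] Euc n →L[ℝ] Euc n)
    (C : Euc n × Euc m → Euc n →L[ℝ] Euc m →L[ℝ] Euc n)
    (D : Euc n × Euc m → Euc m →L[ℝ] Euc m →L[ℝ] Euc n)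
    (K : Euc n × Euc m → Euc m →L[ℝ] Euc n) : Prop where
  lipA : LocallyLipschitz A
  lipB : LocallyLipschitz B
  lipC : LocallyLipschitz C
  lipD : LocallyLipschitz D
  lipK : LocallyLipschitz K
  diffK : Differentiable ℝ K
  lipK' : LocallyLipschitz (fderiv ℝ K)
  contGamma1 : ∀ z : Euc n × Euc m, ∀ ε > (0:ℝ), ∃ δ > (0:ℝ), ∀ z' : Euc n × Euc m,
    dist z' z < δ →
      Metric.hausdorffDist (Gamma A D z' ∩ Metric.closedBall 0 1)
        (Gamma A D z ∩ Metric.closedBall 0 1) < ε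

/-- `(q,p)` solves the control system (DE1) on `[0,T]` with control `u`. -/
def SolvesDE1 {n m : ℕ}
    (A : Euc n × Euc m → Euc n →L[ℝ] Euc n)
    (B : Euc n × Euc m → Euc n →L[ℝ] Euc n →L[ℝ] Euc n)
    (C : Euc n × Euc m → Euc n →L[ℝ] Euc m →L[ℝ] Euc n)
    (D : Euc n × Euc m → Euc m →L[ℝ] Euc m →L[ℝ] Euc n)
    (K : Euc n × Euc m → Euc m →L[ℝ] Euc n)
    (T : ℝ) (u : ℝ → Euc m) (q p : ℝ → Euc n) : Prop :=
  ∀ t ∈ Icc (0:ℝ) T,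
    HasDerivAt q (A (q t, u t) (p t) + K (q t, u t) (deriv u t)) t ∧
    HasDerivAt p (-((1:ℝ)/2) • B (q t, u t) (p t) (p t)
      - C (q t, u t) (p t) (deriv u t)
      + D (q t, u t) (deriv u t) (deriv u t)) t


namespace FMG

variable {n m : ℕ} (A : Euc n × Euc m → Euc n →L[ℝ] Euc n)
    (D : Euc n × Euc m → Euc m →L[ℝ] Euc m →L[ℝ] Euc n)

/-- Generator map. -/
def g (z : Euc n × Euc m) (w : Euc m) : Euc n := A z (D z w w)

lemma zero_mem (z : Euc n × Euc m) :
    (0 : Euc n) ∈ Gamma A D z ∩ Metric.closedBall 0 1 := by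
  refine ⟨subset_closure (subset_convexHull ℝ _ ⟨0, by simp⟩), by simp⟩

lemma convex_rep (z : Euc n × Euc m) {q : Euc n}
    (hq : q ∈ convexHull ℝ {p : Euc n | ∃ w : Euc m, p = A z (D z w w)}) :
    ∃ (W : Finset (Euc m)) (θ : Euc m → ℝ), (∀ u, 0 ≤ θ u) ∧
      (∑ u ∈ W, θ u = 1) ∧ (∑ u ∈ W, θ u • g A D z u = q) := by
  classical
  rw [convexHull_eq] at hq
  obtain ⟨ι, t, wt, zp, hw0, hw1, hzs, hcm⟩ := hq
  have key : ∀ i ∈ t, ∃ w : Euc m, zp i = g A D z w := fun i hi => hzs i hi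
  choose! v hvz using key
  refine ⟨t.image v, fun u => ∑ i ∈ t.filter (fun i => v i = u), wt i, ?_, ?_, ?_⟩
  · intro u
    exact Finset.sum_nonneg fun i hi => hw0 i (Finset.mem_filter.mp hi).1
  · rw [Finset.sum_fiberwise_of_maps_to (fun i hi => Finset.mem_image_of_mem v hi) wt]
    exact hw1
  · have : ∀ u ∈ t.image v,
        (∑ i ∈ t.filter (fun i => v i = u), wt i) • g A D z u
          = ∑ i ∈ t.filter (fun i => v i = u), wt i • zp i := by
      intro u hu
      rw [Finset.sum_smul]
      refine Finset.sum_congr rfl fun i hi => ?_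
      obtain ⟨hit, hvi⟩ := Finset.mem_filter.mp hi
      rw [hvz i hit, hvi]
    rw [Finset.sum_congr rfl this,
      Finset.sum_fiberwise_of_maps_to (fun i hi => Finset.mem_image_of_mem v hi)]
    rw [← Finset.centerMass_eq_of_sum_1 _ _ hw1]
    exact hcm

lemma pointwise (z : Euc n × Euc m) {ε : ℝ} (hε : 0 < ε) :
    ∃ W : Finset (Euc m), ∀ p ∈ Gamma A D z ∩ Metric.closedBall 0 1,
      ∃ θ : Euc m → ℝ, (∀ u, 0 ≤ θ u) ∧ (∀ u ∉ W, θ u = 0) ∧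
        (∑ u ∈ W, θ u = 1) ∧ ‖p - ∑ u ∈ W, θ u • g A D z u‖ < ε := by
  classical
  set S : Set (Euc n) := {p : Euc n | ∃ w : Euc m, p = A z (D z w w)} with hS
  have hK : IsCompact (Gamma A D z ∩ Metric.closedBall 0 1) :=
    (isCompact_closedBall (0:Euc n) 1).inter_left isClosed_closure
  have hcov : Gamma A D z ∩ Metric.closedBall 0 1 ⊆
      ⋃ x ∈ convexHull ℝ S, Metric.ball x ε := by
    intro p hp
    obtain ⟨x, hxC, hxd⟩ := Metric.mem_closure_iff.mp hp.1 ε hε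
    exact mem_biUnion hxC (by simpa [Metric.mem_ball, dist_comm] using hxd)
  obtain ⟨b', hb'sub, hb'fin, hcov'⟩ :=
    hK.elim_finite_subcover_image (fun x _ => Metric.isOpen_ball) hcov
  have hrep : ∀ x : Euc n, ∃ (W : Finset (Euc m)) (θ : Euc m → ℝ),
      x ∈ convexHull ℝ S → ((∀ u, 0 ≤ θ u) ∧
        (∑ u ∈ W, θ u = 1) ∧ ∑ u ∈ W, θ u • g A D z u = x) := by
    intro x
    by_cases h : x ∈ convexHull ℝ S
    · obtain ⟨W, θ, h1, h2, h3⟩ := convex_rep A D z h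
      exact ⟨W, θ, fun _ => ⟨h1, h2, h3⟩⟩
    · exact ⟨∅, fun _ => 0, fun hx => absurd hx h⟩
  choose Wf θf hf using hrep
  refine ⟨hb'fin.toFinset.biUnion Wf, ?_⟩
  intro p hp
  obtain ⟨x, hxb', hpx⟩ := mem_iUnion₂.mp (hcov' hp)
  have hxC : x ∈ convexHull ℝ S := hb'sub hxb'
  obtain ⟨h1, h2, h3⟩ := hf x hxC
  have hsub : Wf x ⊆ hb'fin.toFinset.biUnion Wf := by
    intro u hu
    exact Finset.mem_biUnion.mpr ⟨x, hb'fin.mem_toFinset.mpr hxb', hu⟩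
  refine ⟨fun u => if u ∈ Wf x then θf x u else 0, ?_, ?_, ?_, ?_⟩
  · intro u; dsimp only; split
    · exact h1 _
    · exact le_rfl
  · intro u hu; exact if_neg (fun h => hu (hsub h))
  · show ∑ u ∈ hb'fin.toFinset.biUnion Wf, (if u ∈ Wf x then θf x u else 0) = 1
    rw [← Finset.sum_subset hsub (fun u _ hu => if_neg hu)]
    rw [Finset.sum_congr rfl (fun u hu => if_pos hu)]
    exact h2
  · show ‖p - ∑ u ∈ hb'fin.toFinset.biUnion Wf,
        (if u ∈ Wf x then θf x u else 0) • g A D z u‖ < ε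
    have heq : ∑ u ∈ hb'fin.toFinset.biUnion Wf,
        (if u ∈ Wf x then θf x u else 0) • g A D z u
        = ∑ u ∈ Wf x, θf x u • g A D z u := by
      rw [← Finset.sum_subset hsub (fun u _ hu => by rw [if_neg hu, zero_smul])]
      exact Finset.sum_congr rfl fun u hu => by rw [if_pos hu]
    rw [heq, h3]
    simpa [dist_eq_norm] using hpx

lemma localapprox
    (hA : Continuous A) (hD : Continuous D)
    (hG : ∀ z : Euc n × Euc m, ∀ ε > (0:ℝ), ∃ δ > (0:ℝ), ∀ z' : Euc n × Euc m,
      dist z' z < δ →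
        Metric.hausdorffDist (Gamma A D z' ∩ Metric.closedBall 0 1)
          (Gamma A D z ∩ Metric.closedBall 0 1) < ε)
    (z : Euc n × Euc m) {ε : ℝ} (hε : 0 < ε) :
    ∃ (δ : ℝ) (W : Finset (Euc m)), 0 < δ ∧
      ∀ z' : Euc n × Euc m, dist z' z < δ →
        ∀ p ∈ Gamma A D z' ∩ Metric.closedBall 0 1,
          ∃ θ : Euc m → ℝ, (∀ u, 0 ≤ θ u) ∧ (∀ u ∉ W, θ u = 0) ∧
            (∑ u ∈ W, θ u = 1) ∧ ‖p - ∑ u ∈ W, θ u • g A D z' u‖ ≤ ε := by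
  classical
  have hε3 : 0 < ε / 3 := by linarith
  obtain ⟨W, hW⟩ := pointwise A D z hε3
  obtain ⟨δ₁, hδ₁, hGd⟩ := hG z (ε/3) hε3
  -- continuity of the generators
  have hcont : ∀ w : Euc m, Continuous fun ζ : Euc n × Euc m => g A D ζ w := by
    intro w
    exact hA.clm_apply ((hD.clm_apply continuous_const).clm_apply continuous_const)
  have hev : ∀ᶠ z' in nhds z, ∀ w ∈ W, dist (g A D z' w) (g A D z w) < ε/3 := by
    rw [Filter.eventually_all_finset]
    intro w hw
    have := (hcont w).continuousAt (x := z) (Metric.ball_mem_nhds (g A D z w) hε3)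
    exact this
  obtain ⟨δ₂, hδ₂, hball⟩ := Metric.eventually_nhds_iff_ball.mp hev
  refine ⟨min δ₁ δ₂, W, lt_min hδ₁ hδ₂, ?_⟩
  intro z' hz' p hp
  -- find a nearby point of Γ₁(z)
  have hne : (Gamma A D z ∩ Metric.closedBall 0 1).Nonempty := ⟨0, zero_mem A D z⟩
  have hne' : (Gamma A D z' ∩ Metric.closedBall 0 1).Nonempty := ⟨0, zero_mem A D z'⟩
  have hbd : Bornology.IsBounded (Gamma A D z ∩ Metric.closedBall 0 1) :=
    (Metric.isBounded_closedBall).subset inter_subset_right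
  have hbd' : Bornology.IsBounded (Gamma A D z' ∩ Metric.closedBall 0 1) :=
    (Metric.isBounded_closedBall).subset inter_subset_right
  have hfin := Metric.hausdorffEdist_ne_top_of_nonempty_of_bounded hne' hne hbd' hbd
  have hid : Metric.infDist p (Gamma A D z ∩ Metric.closedBall 0 1) < ε/3 :=
    lt_of_le_of_lt (Metric.infDist_le_hausdorffDist_of_mem hp hfin)
      (hGd z' (lt_of_lt_of_le hz' (min_le_left _ _)))
  obtain ⟨q, hq, hpq⟩ := (Metric.infDist_lt_iff hne).mp hid
  obtain ⟨θ, hθ0, hθsupp, hθ1, hθnorm⟩ := hW q hq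
  refine ⟨θ, hθ0, hθsupp, hθ1, ?_⟩
  have hgd : ∀ w ∈ W, ‖g A D z w - g A D z' w‖ ≤ ε/3 := by
    intro w hw
    have := hball z' (by simpa [Metric.mem_ball] using lt_of_lt_of_le hz' (min_le_right _ _)) w hw
    rw [← dist_eq_norm, dist_comm]
    exact le_of_lt this
  have hsums : ‖(∑ u ∈ W, θ u • g A D z u) - ∑ u ∈ W, θ u • g A D z' u‖ ≤ ε/3 := by
    rw [← Finset.sum_sub_distrib]
    calc ‖∑ u ∈ W, (θ u • g A D z u - θ u • g A D z' u)‖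
        ≤ ∑ u ∈ W, ‖θ u • g A D z u - θ u • g A D z' u‖ := norm_sum_le _ _
      _ ≤ ∑ u ∈ W, θ u * (ε/3) := by
          refine Finset.sum_le_sum fun u hu => ?_
          rw [← smul_sub, norm_smul, Real.norm_eq_abs, abs_of_nonneg (hθ0 u)]
          exact mul_le_mul_of_nonneg_left (hgd u hu) (hθ0 u)
      _ = ε/3 := by rw [← Finset.sum_mul, hθ1, one_mul]
  calc ‖p - ∑ u ∈ W, θ u • g A D z' u‖
      ≤ dist p q + ‖q - ∑ u ∈ W, θ u • g A D z u‖
        + ‖(∑ u ∈ W, θ u • g A D z u) - ∑ u ∈ W, θ u • g A D z' u‖ := by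
        rw [dist_eq_norm]
        exact dist_triangle4 p q _ _
    _ ≤ ε/3 + ε/3 + ε/3 := by
        exact add_le_add (add_le_add (le_of_lt hpq) (le_of_lt hθnorm)) hsums
    _ = ε := by ring

end FMG

/-- **Lemma 2.** Given `ε' > 0` and a compact set `Ω ⊂ ℝ^{n+m}`, there exist finitely
many vectors `w₁, …, w_ν ∈ ℝᵐ` such that every `p ∈ Γ(q,u)` with `|p| ≤ 1`,
`(q,u) ∈ Ω`, is `ε'`-approximated by `A(q,u)·Σ θᵢ (wᵢᵀ D(q,u) wᵢ)` for suitable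
convex coefficients `θ`. -/


theorem finitely_many_generators {n m : ℕ}
    (A : Euc n × Euc m → Euc n →L[ℝ] Euc n)
    (B : Euc n × Euc m → Euc n →L[ℝ] Euc n →L[ℝ] Euc n)
    (C : Euc n × Euc m → Euc n →L[ℝ] Euc m →L[ℝ] Euc n)
    (D : Euc n × Euc m → Euc m →L[ℝ] Euc m →L[ℝ] Euc n)
    (K : Euc n × Euc m → Euc m →L[ℝ] Euc n)
    (hH : HypH A B C D K)
    (ε' : ℝ) (hε' : 0 < ε')
    (Ω : Set (Euc n × Euc m)) (hΩ : IsCompact Ω) :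
    ∃ ν : ℕ, ∃ w : Fin ν → Euc m,
      ∀ z ∈ Ω, ∀ p ∈ Gamma A D z, ‖p‖ ≤ 1 →
        ∃ θ : Fin ν → ℝ, (∀ i, θ i ∈ Icc (0:ℝ) 1) ∧ (∑ i, θ i = 1) ∧
          ‖p - A z (∑ i, θ i • D z (w i) (w i))‖ ≤ ε' := by
  classical
  have hA := hH.lipA.continuous
  have hD := hH.lipD.continuous
  have hloc := fun z => FMG.localapprox A D hA hD hH.contGamma1 z hε'
  choose δf Wf hδf hprop using hloc
  have hcov : Ω ⊆ ⋃ z ∈ Ω, Metric.ball z (δf z) := fun z hz =>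
    mem_biUnion hz (Metric.mem_ball_self (hδf z))
  obtain ⟨b', hb'sub, hb'fin, hcov'⟩ :=
    hΩ.elim_finite_subcover_image (fun z _ => Metric.isOpen_ball) hcov
  set Wtot : Finset (Euc m) := hb'fin.toFinset.biUnion Wf with hWtot
  set e := Wtot.equivFin with he
  have hconv : ∀ {E : Type} [inst : AddCommMonoid E], ∀ F : Euc m → E,
      ∑ i : Fin Wtot.card, F (e.symm i : Euc m) = ∑ u ∈ Wtot, F u := by
    intro E inst F
    rw [Equiv.sum_comp e.symm (fun x : Wtot => F x)]
    exact Finset.sum_coe_sort Wtot F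
  refine ⟨Wtot.card, fun i => (e.symm i : Euc m), ?_⟩
  intro z hz p hpΓ hpn
  obtain ⟨ζ, hζb, hzball⟩ := mem_iUnion₂.mp (hcov' hz)
  have hp1 : p ∈ Gamma A D z ∩ Metric.closedBall 0 1 :=
    ⟨hpΓ, by simpa [Metric.mem_closedBall, dist_zero_right] using hpn⟩
  obtain ⟨θ, hθ0, hθsupp, hθ1, hθnorm⟩ :=
    hprop ζ z (by simpa [Metric.mem_ball] using hzball) p hp1
  have hsub : Wf ζ ⊆ Wtot := fun u hu =>
    Finset.mem_biUnion.mpr ⟨ζ, hb'fin.mem_toFinset.mpr hζb, hu⟩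
  have hsum1 : ∑ u ∈ Wtot, θ u = 1 := by
    rw [← Finset.sum_subset hsub (fun u _ hu => hθsupp u hu)]
    exact hθ1
  have hsumg : ∑ u ∈ Wtot, θ u • FMG.g A D z u = ∑ u ∈ Wf ζ, θ u • FMG.g A D z u :=
    (Finset.sum_subset hsub (fun u _ hu => by rw [hθsupp u hu, zero_smul])).symm
  refine ⟨fun i => θ (e.symm i : Euc m), ?_, ?_, ?_⟩
  · intro i
    refine ⟨hθ0 _, ?_⟩
    calc θ (e.symm i : Euc m) ≤ ∑ u ∈ Wtot, θ u :=
          Finset.single_le_sum (fun u _ => hθ0 u) (e.symm i).2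
      _ = 1 := hsum1
  · rw [hconv θ]; exact hsum1
  · have hAz : A z (∑ i : Fin Wtot.card, θ (e.symm i : Euc m) •
        D z ((e.symm i : Euc m)) ((e.symm i : Euc m)))
        = ∑ i : Fin Wtot.card, θ (e.symm i : Euc m) • FMG.g A D z (e.symm i : Euc m) := by
      rw [map_sum]
      exact Finset.sum_congr rfl fun i _ => by rw [(A z).map_smul]; rfl
    rw [hAz, hconv (fun u => θ u • FMG.g A D z u), hsumg]
    exact hθnorm
end
end

section
/- Assume hypothesis (H). Let Ω ⊂ ℝ^{n+m} be compact and let 𝒟 = {(q,u,p) : (q,u) ∈ Ω, p ∈ Γ(q,u), |p| ≤ 1}. Let ε' > 0 and suppose w₁, …, w_ν ∈ ℝᵐ are vectors such that for every (q,u,p) ∈ 𝒟 there exists θ ∈ Δ_ν with | p − A(q,u) · Σ_{i=1}^ν θ_i ( w_iᵀ D(q,u) w_i ) | ≤ ε'. Then there exists a continuous map Θ = (Θ₁,…,Θ_ν) : 𝒟 → Δ_ν such that | p − A(q,u) · Σ_{i=1}^ν Θ_i(q,u,p) ( w_iᵀ D(q,u) w_i ) | ≤ 2ε' for all (q,u,p)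 ∈ 𝒟. -/
open MeasureTheory Set

noncomputable section

/-- **Lemma 3.** If finitely many vectors `w₁,…,w_ν` give an `ε'`-approximation of
every `p ∈ Γ₁(q,u)` over the compact set `Ω`, then the convex coefficients can be
chosen continuously on `𝒟 = {(q,u,p) : (q,u) ∈ Ω, p ∈ Γ₁(q,u)}`, at the price of
doubling the error. -/
theorem continuous_selection_of_coefficients {n m : ℕ}
    (A : Euc n × Euc m → Euc n →L[ℝ] Euc n)
    (B : Euc n × Euc m → Euc n →L[ℝ] Euc n →L[ℝ] Euc n)
    (C : Euc n × Euc m → Euc n →L[ℝ] Euc m →L[ℝ] Euc n)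
    (D : Euc n × Euc m → Euc m →L[ℝ] Euc m →L[ℝ] Euc n)
    (K : Euc n × Euc m → Euc m →L[ℝ] Euc n)
    (hH : HypH A B C D K)
    (Ω : Set (Euc n × Euc m)) (hΩ : IsCompact Ω)
    (ε' : ℝ) (hε' : 0 < ε')
    (ν : ℕ) (w : Fin ν → Euc m)
    (happrox : ∀ z ∈ Ω, ∀ p ∈ Gamma A D z, ‖p‖ ≤ 1 →
      ∃ θ : Fin ν → ℝ, (∀ i, θ i ∈ Icc (0:ℝ) 1) ∧ (∑ i, θ i = 1) ∧
        ‖p - A z (∑ i, θ i • D z (w i) (w i))‖ ≤ ε') :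
    ∃ Θ : (Euc n × Euc m) × Euc n → Fin ν → ℝ,
      ContinuousOn Θ {x : (Euc n × Euc m) × Euc n |
        x.1 ∈ Ω ∧ x.2 ∈ Gamma A D x.1 ∧ ‖x.2‖ ≤ 1} ∧
      ∀ x : (Euc n × Euc m) × Euc n,
        x.1 ∈ Ω → x.2 ∈ Gamma A D x.1 → ‖x.2‖ ≤ 1 →
          (∀ i, Θ x i ∈ Icc (0:ℝ) 1) ∧ (∑ i, Θ x i = 1) ∧
          ‖x.2 - A x.1 (∑ i, Θ x i • D x.1 (w i) (w i))‖ ≤ 2 * ε':= by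
  classical
  set S : Set ((Euc n × Euc m) × Euc n) :=
    {x : (Euc n × Euc m) × Euc n | x.1 ∈ Ω ∧ x.2 ∈ Gamma A D x.1 ∧ ‖x.2‖ ≤ 1} with hSdef
  -- Basic facts about Γ₁(z) = Gamma z ∩ closedBall 0 1
  have hGzero : ∀ z, (0 : Euc n) ∈ Gamma A D z ∩ Metric.closedBall 0 1 := by
    intro z
    constructor
    · apply subset_closure
      apply subset_convexHull
      exact ⟨0, by simp⟩
    · simp
  have hGne : ∀ z, (Gamma A D z ∩ Metric.closedBall 0 1).Nonempty := fun z => ⟨0, hGzero z⟩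
  have hGclosed : ∀ z, IsClosed (Gamma A D z ∩ Metric.closedBall 0 1) := fun z =>
    isClosed_closure.inter Metric.isClosed_closedBall
  have hGbdd : ∀ z, Bornology.IsBounded (Gamma A D z ∩ Metric.closedBall 0 1) := fun z =>
    Metric.isBounded_closedBall.subset inter_subset_right
  have hGfin : ∀ z z', EMetric.hausdorffEdist (Gamma A D z ∩ Metric.closedBall 0 1)
      (Gamma A D z' ∩ Metric.closedBall 0 1) ≠ ⊤ := fun z z' =>
    Metric.hausdorffEdist_ne_top_of_nonempty_of_bounded (hGne z) (hGne z') (hGbdd z) (hGbdd z')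
  -- S is closed
  have hSclosed : IsClosed S := by
    apply IsSeqClosed.isClosed
    intro u x hu hux
    have h1 : x.1 ∈ Ω := hΩ.isClosed.mem_of_tendsto ((continuous_fst.tendsto x).comp hux)
      (Filter.Eventually.of_forall fun k => (hu k).1)
    have h3 : ‖x.2‖ ≤ 1 := by
      have ht : Filter.Tendsto (fun k => ‖(u k).2‖) Filter.atTop (nhds ‖x.2‖) :=
        ((continuous_snd.tendsto x).comp hux).norm
      exact le_of_tendsto ht (Filter.Eventually.of_forall fun k => (hu k).2.2)
    have hx2 : x.2 ∈ Gamma A D x.1 ∩ Metric.closedBall 0 1 := by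
      rw [(hGclosed x.1).mem_iff_infDist_zero (hGne x.1)]
      refine le_antisymm ?_ Metric.infDist_nonneg
      have key : ∀ ε > (0:ℝ), Metric.infDist x.2 (Gamma A D x.1 ∩ Metric.closedBall 0 1) ≤ 0 + ε := by
        intro ε hε
        obtain ⟨δ, hδ, hδ'⟩ := hH.contGamma1 x.1 (ε/2) (by positivity)
        rw [Metric.tendsto_atTop] at hux
        obtain ⟨N, hN⟩ := hux (min δ (ε/2)) (by positivity)
        have hk := hN N le_rfl
        have hfst : dist (u N).1 x.1 ≤ dist (u N) x := by
          rw [Prod.dist_eq]; exact le_max_left _ _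
        have hsnd : dist (u N).2 x.2 ≤ dist (u N) x := by
          rw [Prod.dist_eq]; exact le_max_right _ _
        have hd1 : dist (u N).1 x.1 < δ := lt_of_le_of_lt hfst (lt_of_lt_of_le hk (min_le_left _ _))
        have hd2 : dist (u N).2 x.2 < ε/2 :=
          lt_of_le_of_lt hsnd (lt_of_lt_of_le hk (min_le_right _ _))
        have hmem : (u N).2 ∈ Gamma A D (u N).1 ∩ Metric.closedBall 0 1 :=
          ⟨(hu N).2.1, by simpa [Metric.mem_closedBall, dist_zero_right] using (hu N).2.2⟩
        have hHd := hδ' _ hd1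
        have h4 := Metric.infDist_le_hausdorffDist_of_mem (t := Gamma A D x.1 ∩ Metric.closedBall 0 1) hmem (hGfin _ _)
        have h5 : Metric.infDist x.2 (Gamma A D x.1 ∩ Metric.closedBall 0 1) ≤
            Metric.infDist (u N).2 (Gamma A D x.1 ∩ Metric.closedBall 0 1) + dist x.2 (u N).2 :=
          Metric.infDist_le_infDist_add_dist
        rw [dist_comm] at h5
        linarith
      have := le_of_forall_pos_le_add key
      linarith [this]
    exact ⟨h1, hx2.1, h3⟩
  -- choose coefficients for each point of S
  have hchoice : ∀ ξ : S, ∃ θ : Fin ν → ℝ, (∀ i, θ i ∈ Icc (0:ℝ) 1) ∧ (∑ i, θ i = 1) ∧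
      ‖(ξ : (Euc n × Euc m) × Euc n).2 - A (ξ : (Euc n × Euc m) × Euc n).1
        (∑ j, θ j • D (ξ : (Euc n × Euc m) × Euc n).1 (w j) (w j))‖ ≤ ε' := fun ξ =>
    happrox ξ.1.1 ξ.2.1 ξ.1.2 ξ.2.2.1 ξ.2.2.2
  choose θ hθ01 hθ1 hθerr using hchoice
  -- each fixed-coefficient error is a continuous function of x
  have hcont : ∀ c : Fin ν → ℝ, Continuous (fun x : (Euc n × Euc m) × Euc n =>
      ‖x.2 - A x.1 (∑ j, c j • D x.1 (w j) (w j))‖) := by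
    intro c
    have hA := hH.lipA.continuous
    have hD := hH.lipD.continuous
    apply Continuous.norm
    apply Continuous.sub continuous_snd
    apply Continuous.clm_apply (hA.comp continuous_fst)
    apply continuous_finset_sum
    intro j _
    exact (continuous_const : Continuous fun _ : (Euc n × Euc m) × Euc n => c j).smul (((hD.comp continuous_fst).clm_apply
      (continuous_const : Continuous fun _ : (Euc n × Euc m) × Euc n => w j)).clm_apply
      (continuous_const : Continuous fun _ : (Euc n × Euc m) × Euc n => w j))
  -- the open cover
  set U : S → Set ((Euc n × Euc m) × Euc n) := fun ξ =>
    {x | ‖x.2 - A x.1 (∑ j, θ ξ j • D x.1 (w j) (w j))‖ < 2 * ε'} with hUdef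
  have hUopen : ∀ ξ, IsOpen (U ξ) := fun ξ => isOpen_lt (hcont (θ ξ)) continuous_const
  have hUcover : S ⊆ ⋃ ξ, U ξ := by
    intro x hx
    exact mem_iUnion.2 ⟨⟨x, hx⟩, lt_of_le_of_lt (hθerr ⟨x, hx⟩) (by linarith)⟩
  obtain ⟨f, hf⟩ := PartitionOfUnity.exists_isSubordinate hSclosed U hUopen hUcover
  refine ⟨fun x j => ∑ᶠ ξ : S, f ξ x • θ ξ j, ?_, ?_⟩
  · apply Continuous.continuousOn
    apply continuous_pi
    intro j
    exact f.continuous_finsum_smul (fun ξ x _ => continuousAt_const)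
  · rintro x hx1 hx2 hx3
    dsimp only
    have hxS : x ∈ S := ⟨hx1, hx2, hx3⟩
    have hfin : (Function.support fun ξ : S => f ξ x).Finite := f.locallyFinite.point_finite x
    have hnn : ∀ ξ : S, 0 ≤ f ξ x := fun ξ => f.nonneg ξ x
    have hsum1 : ∑ ξ ∈ hfin.toFinset, f ξ x = 1 := by
      rw [← finsum_eq_sum _ hfin]; exact f.sum_eq_one hxS
    have hfinsum : ∀ j, (∑ᶠ ξ : S, f ξ x • θ ξ j) = ∑ ξ ∈ hfin.toFinset, f ξ x * θ ξ j := by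
      intro j
      have hsub : (Function.support fun ξ : S => f ξ x • θ ξ j) ⊆ ↑hfin.toFinset := by
        rw [Set.Finite.coe_toFinset]
        intro ξ hξ
        simp only [Function.mem_support, ne_eq] at hξ ⊢
        intro h0
        exact hξ (by rw [h0, zero_smul])
      rw [finsum_eq_sum_of_support_subset _ hsub]
      simp [smul_eq_mul]
    have herr : ∀ ξ ∈ hfin.toFinset,
        ‖x.2 - A x.1 (∑ j, θ ξ j • D x.1 (w j) (w j))‖ < 2 * ε' := by
      intro ξ hξ
      have hx0 : f ξ x ≠ 0 := by simpa [Function.mem_support] using hfin.mem_toFinset.1 hξ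
      have hxU : x ∈ U ξ := hf ξ (subset_tsupport _ hx0)
      exact hxU
    constructor
    · intro j
      rw [Set.mem_Icc]
      constructor
      · rw [hfinsum j]
        exact Finset.sum_nonneg fun ξ _ => mul_nonneg (hnn ξ) (hθ01 ξ j).1
      · rw [hfinsum j]
        calc ∑ ξ ∈ hfin.toFinset, f ξ x * θ ξ j
            ≤ ∑ ξ ∈ hfin.toFinset, f ξ x * 1 :=
              Finset.sum_le_sum fun ξ _ => mul_le_mul_of_nonneg_left (hθ01 ξ j).2 (hnn ξ)
          _ = 1 := by simp [hsum1]
    refine ⟨?_, ?_⟩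
    · simp only [hfinsum]
      rw [Finset.sum_comm]
      calc ∑ ξ ∈ hfin.toFinset, ∑ j, f ξ x * θ ξ j
          = ∑ ξ ∈ hfin.toFinset, f ξ x * ∑ j, θ ξ j := by
            simp [Finset.mul_sum]
        _ = ∑ ξ ∈ hfin.toFinset, f ξ x := by
            refine Finset.sum_congr rfl fun ξ _ => ?_
            rw [hθ1 ξ, mul_one]
        _ = 1 := hsum1
    · simp only [hfinsum]
      have key : (∑ j, (∑ ξ ∈ hfin.toFinset, f ξ x * θ ξ j) • D x.1 (w j) (w j))
          = ∑ ξ ∈ hfin.toFinset, f ξ x • (∑ j, θ ξ j • D x.1 (w j) (w j)) := by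
        simp_rw [Finset.sum_smul, Finset.smul_sum, smul_smul]
        exact Finset.sum_comm
      rw [key]
      have eq2 : x.2 - A x.1 (∑ ξ ∈ hfin.toFinset, f ξ x • (∑ j, θ ξ j • D x.1 (w j) (w j)))
          = ∑ ξ ∈ hfin.toFinset, f ξ x • (x.2 - A x.1 (∑ j, θ ξ j • D x.1 (w j) (w j))) := by
        have e1 : ∑ ξ ∈ hfin.toFinset, f ξ x • (x.2 - A x.1 (∑ j, θ ξ j • D x.1 (w j) (w j)))
            = (∑ ξ ∈ hfin.toFinset, f ξ x) • x.2
              - ∑ ξ ∈ hfin.toFinset, f ξ x • A x.1 (∑ j, θ ξ j • D x.1 (w j) (w j)) := by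
          simp only [smul_sub]
          rw [Finset.sum_sub_distrib, ← Finset.sum_smul]
        rw [e1, hsum1, one_smul, map_sum]
        simp only [_root_.map_smul]
      rw [eq2]
      calc ‖∑ ξ ∈ hfin.toFinset, f ξ x • (x.2 - A x.1 (∑ j, θ ξ j • D x.1 (w j) (w j)))‖
          ≤ ∑ ξ ∈ hfin.toFinset, ‖f ξ x • (x.2 - A x.1 (∑ j, θ ξ j • D x.1 (w j) (w j)))‖ :=
            norm_sum_le _ _
        _ = ∑ ξ ∈ hfin.toFinset, f ξ x * ‖x.2 - A x.1 (∑ j, θ ξ j • D x.1 (w j) (w j))‖ := by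
            refine Finset.sum_congr rfl fun ξ _ => ?_
            rw [norm_smul, Real.norm_eq_abs, abs_of_nonneg (hnn ξ)]
        _ ≤ ∑ ξ ∈ hfin.toFinset, f ξ x * (2 * ε') :=
            Finset.sum_le_sum fun ξ hξ =>
              mul_le_mul_of_nonneg_left (le_of_lt (herr ξ hξ)) (hnn ξ)
        _ = 2 * ε' := by rw [← Finset.sum_mul, hsum1, one_mul]
end
end

section
/- Let h : [0,1] → ℝ be twice continuously differentiable with h'(s) > 0 for all s ∈ [0,1], let β : [0,1] → ℝ^d be continuously differentiable, and let α > 0. Then for every τ ∈ [0,1], | ∫₀^τ cos(α³ h(s)) β(s) ds | ≤ (2/α³) ( |β(τ)| / h'(τ) + ∫₀^τ | (d/ds)( β(s)/h'(s) ) | ds ). -/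
open MeasureTheory Set

noncomputable section

/-- Estimate on rapidly oscillating integrals, obtained by integration by parts:
`|∫₀^τ cos(α³h(s)) β(s) ds| ≤ (2/α³)(|β(τ)|/h'(τ) + ∫₀^τ |(β/h')'(s)| ds)`. -/
theorem oscillating_integral_estimate {d : ℕ}
    (h h' h'' : ℝ → ℝ) (β β' : ℝ → Euc d) (α : ℝ) (hα : 0 < α)
    (hh : ∀ s ∈ Icc (0:ℝ) 1, HasDerivWithinAt h (h' s) (Icc 0 1) s)
    (hh' : ∀ s ∈ Icc (0:ℝ) 1, HasDerivWithinAt h' (h'' s) (Icc 0 1) s)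
    (hh''c : ContinuousOn h'' (Icc 0 1))
    (hpos : ∀ s ∈ Icc (0:ℝ) 1, 0 < h' s)
    (hβ : ∀ s ∈ Icc (0:ℝ) 1, HasDerivWithinAt β (β' s) (Icc 0 1) s)
    (hβ'c : ContinuousOn β' (Icc 0 1))
    (τ : ℝ) (hτ : τ ∈ Icc (0:ℝ) 1) :
    ‖∫ s in (0:ℝ)..τ, Real.cos (α ^ 3 * h s) • β s‖ ≤
      (2 / α ^ 3) * (‖β τ‖ / h' τ +
        ∫ s in (0:ℝ)..τ, ‖(h' s)⁻¹ • β' s - (h'' s / (h' s) ^ 2) • β s‖) := by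
  obtain ⟨hτ0, hτ1⟩ := hτ
  have hτmem : τ ∈ Icc (0:ℝ) 1 := ⟨hτ0, hτ1⟩
  have h0mem : (0:ℝ) ∈ Icc (0:ℝ) 1 := ⟨le_refl 0, zero_le_one⟩
  have hA : (0:ℝ) < α ^ 3 := by positivity
  have hAinv : (0:ℝ) ≤ (α ^ 3)⁻¹ := (inv_pos.mpr hA).le
  have hsub : Icc (0:ℝ) τ ⊆ Icc 0 1 := Icc_subset_Icc le_rfl hτ1
  have hne : ∀ s ∈ Icc (0:ℝ) 1, h' s ≠ 0 := fun s hs => (hpos s hs).ne'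
  have hconth : ContinuousOn h (Icc 0 1) := fun s hs => (hh s hs).continuousWithinAt
  have hconth' : ContinuousOn h' (Icc 0 1) := fun s hs => (hh' s hs).continuousWithinAt
  have hcontβ : ContinuousOn β (Icc 0 1) := fun s hs => (hβ s hs).continuousWithinAt
  set u : ℝ → ℝ := fun s => (α ^ 3)⁻¹ * Real.sin (α ^ 3 * h s) with hu_def
  set u' : ℝ → ℝ := fun s => Real.cos (α ^ 3 * h s) * h' s with hu'_def
  set v : ℝ → Euc d := fun s => (h' s)⁻¹ • β s with hv_def
  set w : ℝ → Euc d := fun s => (h' s)⁻¹ • β' s - (h'' s / (h' s) ^ 2) • β s with hw_def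
  -- derivatives
  have hu : ∀ s ∈ Icc (0:ℝ) 1, HasDerivWithinAt u (u' s) (Icc 0 1) s := by
    intro s hs
    have h1 : HasDerivWithinAt (fun t => Real.sin (α ^ 3 * h t))
        (Real.cos (α ^ 3 * h s) * (α ^ 3 * h' s)) (Icc 0 1) s :=
      (Real.hasDerivAt_sin (α ^ 3 * h s)).comp_hasDerivWithinAt (h := fun t => α ^ 3 * h t) s ((hh s hs).const_mul (α ^ 3))
    have h2 := h1.const_mul ((α ^ 3)⁻¹)
    refine h2.congr_deriv ?_
    simp only [hu'_def]
    field_simp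
  have hv : ∀ s ∈ Icc (0:ℝ) 1, HasDerivWithinAt v (w s) (Icc 0 1) s := by
    intro s hs
    have hinv : HasDerivWithinAt (fun t => (h' t)⁻¹) (-h'' s / (h' s) ^ 2) (Icc 0 1) s :=
      (hh' s hs).inv (hne s hs)
    have h2 := hinv.smul (hβ s hs)
    refine h2.congr_deriv ?_
    rw [hw_def]
    simp only [neg_div, neg_smul, sub_eq_add_neg]
  have hF : ∀ s ∈ Icc (0:ℝ) 1,
      HasDerivWithinAt (fun t => u t • v t) (u s • w s + u' s • v s) (Icc 0 1) s :=
    fun s hs => (hu s hs).smul (hv s hs)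
  -- continuity
  have hcontu : ContinuousOn u (Icc 0 1) :=
    continuousOn_const.mul (Real.continuous_sin.comp_continuousOn (continuousOn_const.mul hconth))
  have hcontu' : ContinuousOn u' (Icc 0 1) :=
    (Real.continuous_cos.comp_continuousOn (continuousOn_const.mul hconth)).mul hconth'
  have hcontv : ContinuousOn v (Icc 0 1) := (hconth'.inv₀ hne).smul hcontβ
  have hcontw : ContinuousOn w (Icc 0 1) :=
    ((hconth'.inv₀ hne).smul hβ'c).sub
      ((hh''c.div (hconth'.pow 2) fun s hs => pow_ne_zero 2 (hne s hs)).smul hcontβ)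
  -- integrability on [0, τ]
  have hIcc : uIcc (0:ℝ) τ = Icc 0 τ := uIcc_of_le hτ0
  have hii : ∀ (E : Type) [inst : NormedAddCommGroup E] [NormedSpace ℝ E] (f : ℝ → E),
      ContinuousOn f (Icc 0 1) → IntervalIntegrable f volume 0 τ := by
    intro E _ _ f hf
    apply ContinuousOn.intervalIntegrable
    rw [hIcc]
    exact hf.mono hsub
  have hint_w : IntervalIntegrable w volume 0 τ := hii _ w hcontw
  have hint_uw : IntervalIntegrable (fun s => u s • w s) volume 0 τ :=
    hii _ _ (hcontu.smul hcontw)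
  have hint_u'v : IntervalIntegrable (fun s => u' s • v s) volume 0 τ :=
    hii _ _ (hcontu'.smul hcontv)
  -- FTC
  have key : ∀ (f f' : ℝ → Euc d), (∀ s ∈ Icc (0:ℝ) 1, HasDerivWithinAt f (f' s) (Icc 0 1) s) →
      IntervalIntegrable f' volume 0 τ → ∫ s in (0:ℝ)..τ, f' s = f τ - f 0 := by
    intro f f' hf hint
    have hcf : ContinuousOn f (Icc 0 1) := fun s hs => (hf s hs).continuousWithinAt
    apply intervalIntegral.integral_eq_sub_of_hasDeriv_right_of_le hτ0 (hcf.mono hsub) _ hint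
    intro x hx
    have hx1 : x ∈ Icc (0:ℝ) 1 := ⟨hx.1.le, (hx.2.trans_le hτ1).le⟩
    exact ((hf x hx1).hasDerivAt (Icc_mem_nhds hx.1 (hx.2.trans_le hτ1))).hasDerivWithinAt
  have hFTCv : ∫ s in (0:ℝ)..τ, w s = v τ - v 0 := key v w hv hint_w
  have hFTCF : ∫ s in (0:ℝ)..τ, (u s • w s + u' s • v s) = u τ • v τ - u 0 • v 0 :=
    key _ _ hF (hint_uw.add hint_u'v)
  -- rewrite the target integral
  have heq : ∫ s in (0:ℝ)..τ, Real.cos (α ^ 3 * h s) • β s = ∫ s in (0:ℝ)..τ, u' s • v s := by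
    apply intervalIntegral.integral_congr
    intro s hs
    rw [hIcc] at hs
    have hs1 := hsub hs
    simp only [hu'_def, hv_def, smul_smul]
    rw [mul_assoc, mul_inv_cancel₀ (hne s hs1), mul_one]
  have hsplit : ∫ s in (0:ℝ)..τ, u' s • v s =
      (u τ • v τ - u 0 • v 0) - ∫ s in (0:ℝ)..τ, u s • w s := by
    rw [← hFTCF, intervalIntegral.integral_add hint_uw hint_u'v]
    abel
  -- bound on |u|
  have hubd : ∀ s ∈ Icc (0:ℝ) 1, ‖u s‖ ≤ (α ^ 3)⁻¹ := by
    intro s hs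
    rw [hu_def]
    simp only [Real.norm_eq_abs, abs_mul, abs_of_pos (inv_pos.mpr hA)]
    calc (α ^ 3)⁻¹ * |Real.sin (α ^ 3 * h s)| ≤ (α ^ 3)⁻¹ * 1 :=
          mul_le_mul_of_nonneg_left (Real.abs_sin_le_one _) hAinv
      _ = (α ^ 3)⁻¹ := mul_one _
  -- abbreviation for the integral of ‖w‖
  set I : ℝ := ∫ s in (0:ℝ)..τ, ‖w s‖ with hI_def
  have hI0 : 0 ≤ I := intervalIntegral.integral_nonneg hτ0 fun s _ => norm_nonneg _
  have hIw : ‖∫ s in (0:ℝ)..τ, w s‖ ≤ I := intervalIntegral.norm_integral_le_integral_norm hτ0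
  have hv0 : ‖v 0‖ ≤ ‖v τ‖ + I := by
    have hveq : v 0 = v τ - ∫ s in (0:ℝ)..τ, w s := by rw [hFTCv]; abel
    rw [hveq]
    exact (norm_sub_le _ _).trans (add_le_add_right hIw _)
  have hbd_uw : ‖∫ s in (0:ℝ)..τ, u s • w s‖ ≤ (α ^ 3)⁻¹ * I := by
    calc ‖∫ s in (0:ℝ)..τ, u s • w s‖ ≤ ∫ s in (0:ℝ)..τ, ‖u s • w s‖ :=
          intervalIntegral.norm_integral_le_integral_norm hτ0
      _ ≤ ∫ s in (0:ℝ)..τ, (α ^ 3)⁻¹ * ‖w s‖ := by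
          apply intervalIntegral.integral_mono_on hτ0 hint_uw.norm (hint_w.norm.const_mul _)
          intro s hs
          rw [norm_smul]
          exact mul_le_mul_of_nonneg_right (hubd s (hsub hs)) (norm_nonneg _)
      _ = (α ^ 3)⁻¹ * I := by rw [intervalIntegral.integral_const_mul]
  have h1 : ‖u τ • v τ‖ ≤ (α ^ 3)⁻¹ * ‖v τ‖ := by
    rw [norm_smul]
    exact mul_le_mul_of_nonneg_right (hubd τ hτmem) (norm_nonneg _)
  have h0 : ‖u 0 • v 0‖ ≤ (α ^ 3)⁻¹ * ‖v 0‖ := by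
    rw [norm_smul]
    exact mul_le_mul_of_nonneg_right (hubd 0 h0mem) (norm_nonneg _)
  have hvτ : ‖v τ‖ = ‖β τ‖ / h' τ := by
    rw [hv_def]
    simp only [norm_smul, Real.norm_eq_abs, abs_of_pos (inv_pos.mpr (hpos τ hτmem))]
    rw [inv_mul_eq_div]
  rw [heq, hsplit, ← hvτ]
  calc ‖(u τ • v τ - u 0 • v 0) - ∫ s in (0:ℝ)..τ, u s • w s‖
      ≤ ‖u τ • v τ - u 0 • v 0‖ + ‖∫ s in (0:ℝ)..τ, u s • w s‖ := norm_sub_le _ _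
    _ ≤ (‖u τ • v τ‖ + ‖u 0 • v 0‖) + ‖∫ s in (0:ℝ)..τ, u s • w s‖ :=
        add_le_add_left (norm_sub_le _ _) _
    _ ≤ ((α ^ 3)⁻¹ * ‖v τ‖ + (α ^ 3)⁻¹ * ‖v 0‖) + (α ^ 3)⁻¹ * I :=
        add_le_add (add_le_add h1 h0) hbd_uw
    _ ≤ 2 / α ^ 3 * (‖v τ‖ + I) := by
        have := mul_le_mul_of_nonneg_left hv0 hAinv
        rw [div_eq_mul_inv]
        nlinarith [norm_nonneg (v τ)]
end
end

section
/- Let β : [0,1] → ℝ^d be continuously differentiable and let α > 0. Then for every τ ∈ [0,1], the integral I₁ = ∫₀^τ α² e^{−α²(τ−s)} β(s) ds satisfies | I₁ − β(τ) | ≤ e^{−α²τ} |β(τ)| + α^{−2} · sup_{s∈[0,1]} |β'(s)|. -/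
open MeasureTheory Set

noncomputable section

/-- Estimate (I1est): `I₁ = ∫₀^τ α² e^{−α²(τ−s)} β(s) ds` satisfies
`|I₁ − β(τ)| ≤ e^{−α²τ}|β(τ)| + α⁻² sup |β'|`. -/
theorem exponential_averaging_estimate {d : ℕ}
    (β β' : ℝ → Euc d) (α : ℝ) (hα : 0 < α)
    (hβ : ∀ s ∈ Icc (0:ℝ) 1, HasDerivWithinAt β (β' s) (Icc 0 1) s)
    (hβ'c : ContinuousOn β' (Icc 0 1))
    (τ : ℝ) (hτ : τ ∈ Icc (0:ℝ) 1) :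
    ‖(∫ s in (0:ℝ)..τ, (α ^ 2 * Real.exp (-α ^ 2 * (τ - s))) • β s) - β τ‖ ≤
      Real.exp (-α ^ 2 * τ) * ‖β τ‖ +
        (α ^ 2)⁻¹ * ⨆ s : Icc (0:ℝ) 1, ‖β' ↑s‖ := by
  obtain ⟨hτ0, hτ1⟩ := hτ
  set a : ℝ := α ^ 2 with ha_def
  have ha : 0 < a := by positivity
  set M : ℝ := ⨆ s : Icc (0:ℝ) 1, ‖β' ↑s‖ with hM_def
  set k : ℝ → ℝ := fun s => a * Real.exp (-a * (τ - s)) with hk_def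
  -- M bounds ‖β'‖ on [0,1]
  have hbdd : BddAbove (Set.range fun s : Icc (0:ℝ) 1 => ‖β' (s : ℝ)‖) := by
    have : (Set.range fun s : Icc (0:ℝ) 1 => ‖β' (s : ℝ)‖)
        = (fun x => ‖β' x‖) '' Icc (0:ℝ) 1 := by
      rw [show (fun s : Icc (0:ℝ) 1 => ‖β' (s : ℝ)‖) = (fun x => ‖β' x‖) ∘ Subtype.val from rfl,
        Set.range_comp, Subtype.range_coe]
    rw [this]
    exact (isCompact_Icc.image_of_continuousOn hβ'c.norm).bddAbove
  have hMle : ∀ s ∈ Icc (0:ℝ) 1, ‖β' s‖ ≤ M := by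
    intro s hs
    exact le_ciSup hbdd (⟨s, hs⟩ : Icc (0:ℝ) 1)
  have hM0 : 0 ≤ M := le_trans (norm_nonneg _) (hMle 0 (by constructor <;> norm_num))
  -- Lipschitz-type bound
  have hLip : ∀ s ∈ Icc (0:ℝ) 1, ‖β s - β τ‖ ≤ M * |s - τ| := by
    intro s hs
    have := (convex_Icc (0:ℝ) 1).norm_image_sub_le_of_norm_hasDerivWithin_le
      hβ hMle ⟨hτ0, hτ1⟩ hs
    simpa [Real.norm_eq_abs] using this
  have hβc : ContinuousOn β (Icc 0 1) := fun s hs => (hβ s hs).continuousWithinAt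
  have hsub : Set.uIcc (0:ℝ) τ ⊆ Icc (0:ℝ) 1 := by
    rw [Set.uIcc_of_le hτ0]
    exact Icc_subset_Icc le_rfl hτ1
  have hkc : Continuous k := by fun_prop
  -- integrability facts
  have hint1 : IntervalIntegrable (fun s => k s • β s) volume 0 τ :=
    (ContinuousOn.smul (hkc.continuousOn) (hβc.mono hsub)).intervalIntegrable
  have hint2 : IntervalIntegrable (fun s => k s • β τ) volume 0 τ :=
    (hkc.smul continuous_const).intervalIntegrable 0 τ
  -- ∫ k = 1 - exp(-aτ)
  have hderiv : ∀ s : ℝ, HasDerivAt (fun u => Real.exp (-a * (τ - u))) (k s) s := by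
    intro s
    have h1 : HasDerivAt (fun u : ℝ => -a * (τ - u)) a s := by
      have := ((hasDerivAt_const s τ).sub (hasDerivAt_id s)).const_mul (-a)
      refine this.congr_deriv ?_; ring
    have := h1.exp
    convert this using 1
    simp [hk_def, mul_comm]
  have hI2 : (∫ s in (0:ℝ)..τ, k s) = 1 - Real.exp (-a * τ) := by
    rw [intervalIntegral.integral_eq_sub_of_hasDerivAt (fun x _ => hderiv x)
      (hkc.intervalIntegrable 0 τ)]
    simp
  -- ∫ k (τ - s) = a⁻¹ - (τ + a⁻¹) exp(-aτ)
  have hderiv2 : ∀ s : ℝ, HasDerivAt (fun u => (τ - u + a⁻¹) * Real.exp (-a * (τ - u)))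
      (k s * (τ - s)) s := by
    intro s
    have h1 : HasDerivAt (fun u : ℝ => τ - u + a⁻¹) (-1) s := by
      have := (((hasDerivAt_const s τ).sub (hasDerivAt_id s)).add_const a⁻¹)
      refine this.congr_deriv ?_; ring
    have := h1.mul (hderiv s)
    refine this.congr_deriv ?_
    simp only [k]
    field_simp
    ring
  have hkτc : Continuous fun s => k s * (τ - s) := by fun_prop
  have hI3 : (∫ s in (0:ℝ)..τ, k s * (τ - s))
      = a⁻¹ - (τ + a⁻¹) * Real.exp (-a * τ) := by
    rw [intervalIntegral.integral_eq_sub_of_hasDerivAt (fun x _ => hderiv2 x)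
      (hkτc.intervalIntegrable 0 τ)]
    simp
  -- splitting
  have hsplit : (∫ s in (0:ℝ)..τ, k s • β s) - β τ
      = (∫ s in (0:ℝ)..τ, k s • (β s - β τ)) - Real.exp (-a * τ) • β τ := by
    have h1 : (∫ s in (0:ℝ)..τ, k s • (β s - β τ))
        = (∫ s in (0:ℝ)..τ, k s • β s) - (∫ s in (0:ℝ)..τ, k s) • β τ := by
      simp_rw [smul_sub]
      rw [intervalIntegral.integral_sub hint1 hint2, intervalIntegral.integral_smul_const]
    rw [h1, hI2, sub_smul, one_smul]
    abel
  -- bound the first integral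
  have hbound1 : ‖∫ s in (0:ℝ)..τ, k s • (β s - β τ)‖
      ≤ ∫ s in (0:ℝ)..τ, M * (k s * (τ - s)) := by
    refine le_trans (intervalIntegral.norm_integral_le_integral_norm hτ0) ?_
    refine intervalIntegral.integral_mono_on hτ0
      ((ContinuousOn.smul hkc.continuousOn ((hβc.mono hsub).sub continuousOn_const)).norm.intervalIntegrable)
      ((continuous_const.mul hkτc).intervalIntegrable 0 τ) ?_
    intro s hs
    have hs01 : s ∈ Icc (0:ℝ) 1 := ⟨hs.1, le_trans hs.2 hτ1⟩
    have hks : 0 ≤ k s := by positivity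
    have h1 : ‖β s - β τ‖ ≤ M * (τ - s) := by
      have := hLip s hs01
      rwa [abs_of_nonpos (by linarith [hs.2]), neg_sub] at this
    calc ‖k s • (β s - β τ)‖ = k s * ‖β s - β τ‖ := by
          rw [norm_smul, Real.norm_eq_abs, abs_of_nonneg hks]
      _ ≤ k s * (M * (τ - s)) := by
          apply mul_le_mul_of_nonneg_left h1 hks
      _ = M * (k s * (τ - s)) := by ring
  have hbound2 : (∫ s in (0:ℝ)..τ, M * (k s * (τ - s))) ≤ a⁻¹ * M := by
    rw [intervalIntegral.integral_const_mul, hI3]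
    have hpos : 0 ≤ (τ + a⁻¹) * Real.exp (-a * τ) := by positivity
    nlinarith
  calc ‖(∫ s in (0:ℝ)..τ, k s • β s) - β τ‖
      = ‖(∫ s in (0:ℝ)..τ, k s • (β s - β τ)) - Real.exp (-a * τ) • β τ‖ := by rw [hsplit]
    _ ≤ ‖∫ s in (0:ℝ)..τ, k s • (β s - β τ)‖ + ‖Real.exp (-a * τ) • β τ‖ := norm_sub_le _ _
    _ ≤ a⁻¹ * M + Real.exp (-a * τ) * ‖β τ‖ := by
        gcongr
        · exact hbound1.trans hbound2
        · rw [norm_smul, Real.norm_eq_abs, abs_of_pos (Real.exp_pos _)]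
    _ = Real.exp (-a * τ) * ‖β τ‖ + a⁻¹ * M := by ring
end
end

section
/- Let h : [0,1] → ℝ be twice continuously differentiable with h'(s) ≥ c > 0 for all s ∈ [0,1], let β : [0,1] → ℝ^d be continuously differentiable, and let α ≥ 1. Then for every τ ∈ [0,1], the integral I₂ = ∫₀^τ α² e^{−α²(τ−s)} ( 2cos²(α³ h(s)) − 1 ) β(s) ds satisfies | I₂ | ≤ (1/α) ( α² ‖β‖_∞ + ‖β'‖_∞ ) · c^{−1} + (1/α) ‖β‖_∞ · sup_{s∈[0,1]} | h''(s)/(h'(s))² |, where ‖β‖_∞ = sup_{s∈[0,1]} |β(s)| and ‖β'‖_∞ = sup_{s∈[0,1]} |β'(s)|. -/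
open MeasureTheory Set

noncomputable section

set_option maxHeartbeats 1000000 in
/-- Estimate (I2est): the rapidly oscillating exponentially weighted integral
`I₂ = ∫₀^τ α² e^{−α²(τ−s)} (2cos²(α³h(s)) − 1) β(s) ds` satisfies
`|I₂| ≤ (1/α)(α²‖β‖ + ‖β'‖) c⁻¹ + (1/α)‖β‖ sup|h''/(h')²|`. -/
theorem oscillating_exponential_estimate {d : ℕ}
    (h h' h'' : ℝ → ℝ) (β β' : ℝ → Euc d) (α c : ℝ)
    (hα : 1 ≤ α) (hc : 0 < c)
    (hh : ∀ s ∈ Icc (0:ℝ) 1, HasDerivWithinAt h (h' s) (Icc 0 1) s)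
    (hh' : ∀ s ∈ Icc (0:ℝ) 1, HasDerivWithinAt h' (h'' s) (Icc 0 1) s)
    (hh''c : ContinuousOn h'' (Icc 0 1))
    (hge : ∀ s ∈ Icc (0:ℝ) 1, c ≤ h' s)
    (hβ : ∀ s ∈ Icc (0:ℝ) 1, HasDerivWithinAt β (β' s) (Icc 0 1) s)
    (hβ'c : ContinuousOn β' (Icc 0 1))
    (τ : ℝ) (hτ : τ ∈ Icc (0:ℝ) 1) :
    ‖∫ s in (0:ℝ)..τ,
        (α ^ 2 * Real.exp (-α ^ 2 * (τ - s)) * (2 * Real.cos (α ^ 3 * h s) ^ 2 - 1)) • β s‖ ≤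
      (1 / α) * (α ^ 2 * (⨆ s : Icc (0:ℝ) 1, ‖β ↑s‖) + ⨆ s : Icc (0:ℝ) 1, ‖β' ↑s‖) * c⁻¹
        + (1 / α) * (⨆ s : Icc (0:ℝ) 1, ‖β ↑s‖) * ⨆ s : Icc (0:ℝ) 1, |h'' ↑s / (h' ↑s) ^ 2| := by
  obtain ⟨hτ0, hτ1⟩ := hτ
  have hα0 : (0:ℝ) < α := lt_of_lt_of_le one_pos hα
  have hsub : Icc (0:ℝ) τ ⊆ Icc 0 1 := Icc_subset_Icc le_rfl hτ1
  have hpos : ∀ s ∈ Icc (0:ℝ) 1, 0 < h' s := fun s hs => lt_of_lt_of_le hc (hge s hs)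
  have hne : ∀ s ∈ Icc (0:ℝ) 1, h' s ≠ 0 := fun s hs => (hpos s hs).ne'
  -- sups
  set M₁ := ⨆ s : Icc (0:ℝ) 1, ‖β ↑s‖ with hM₁def
  set M₂ := ⨆ s : Icc (0:ℝ) 1, ‖β' ↑s‖ with hM₂def
  set M₃ := ⨆ s : Icc (0:ℝ) 1, |h'' ↑s / (h' ↑s) ^ 2| with hM₃def
  -- continuity facts
  have hβc : ContinuousOn β (Icc 0 1) := fun s hs => (hβ s hs).continuousWithinAt
  have hh'cont : ContinuousOn h' (Icc 0 1) := fun s hs => (hh' s hs).continuousWithinAt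
  have hhcont : ContinuousOn h (Icc 0 1) := fun s hs => (hh s hs).continuousWithinAt
  have hinvcont : ContinuousOn (fun s => (h' s)⁻¹) (Icc 0 1) := hh'cont.inv₀ hne
  have hdivcont : ContinuousOn (fun s => h'' s / (h' s) ^ 2) (Icc 0 1) :=
    hh''c.div (hh'cont.pow 2) (fun s hs => pow_ne_zero _ (hne s hs))
  -- boundedness of sups
  have hbdd1 : BddAbove (range fun s : Icc (0:ℝ) 1 => ‖β ↑s‖) :=
    (isCompact_range ((continuous_norm.comp_continuousOn hβc).restrict)).bddAbove
  have hbdd2 : BddAbove (range fun s : Icc (0:ℝ) 1 => ‖β' ↑s‖) :=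
    (isCompact_range ((continuous_norm.comp_continuousOn hβ'c).restrict)).bddAbove
  have hbdd3 : BddAbove (range fun s : Icc (0:ℝ) 1 => |h'' ↑s / (h' ↑s) ^ 2|) :=
    (isCompact_range ((continuous_abs.comp_continuousOn hdivcont).restrict)).bddAbove
  have hM₁le : ∀ s ∈ Icc (0:ℝ) 1, ‖β s‖ ≤ M₁ := fun s hs => le_ciSup hbdd1 ⟨s, hs⟩
  have hM₂le : ∀ s ∈ Icc (0:ℝ) 1, ‖β' s‖ ≤ M₂ := fun s hs => le_ciSup hbdd2 ⟨s, hs⟩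
  have hM₃le : ∀ s ∈ Icc (0:ℝ) 1, |h'' s / (h' s) ^ 2| ≤ M₃ := fun s hs => le_ciSup hbdd3 ⟨s, hs⟩
  have hM₁0 : 0 ≤ M₁ := le_trans (norm_nonneg _) (hM₁le 0 (by norm_num))
  have hM₂0 : 0 ≤ M₂ := le_trans (norm_nonneg _) (hM₂le 0 (by norm_num))
  have hM₃0 : 0 ≤ M₃ := le_trans (abs_nonneg _) (hM₃le 0 (by norm_num))
  -- the key auxiliary functions
  set E : ℝ → ℝ := fun s => Real.exp (-α ^ 2 * (τ - s)) with hEdef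
  set ψ : ℝ → ℝ := fun s => (2 * α)⁻¹ * (E s * (h' s)⁻¹) with hψdef
  set ψ' : ℝ → ℝ := fun s =>
    (2 * α)⁻¹ * (α ^ 2 * E s * (h' s)⁻¹ + E s * (-(h'' s) / (h' s) ^ 2)) with hψ'def
  set u : ℝ → Euc d := fun s => ψ s • β s with hudef
  set u' : ℝ → Euc d := fun s => ψ s • β' s + ψ' s • β s with hu'def
  set g : ℝ → ℝ := fun s => Real.sin (2 * α ^ 3 * h s) with hgdef
  set g' : ℝ → ℝ := fun s => Real.cos (2 * α ^ 3 * h s) * (2 * α ^ 3 * h' s) with hg'def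
  -- E properties
  have hE0 : ∀ s, 0 < E s := fun s => Real.exp_pos _
  have hEτ : E τ = 1 := by simp [hEdef]
  have hEle : ∀ s ∈ Icc (0:ℝ) τ, E s ≤ 1 := by
    intro s hs
    rw [hEdef]
    simp only
    rw [show (1:ℝ) = Real.exp 0 by simp]
    apply Real.exp_le_exp.2
    nlinarith [hs.2, sq_nonneg α]
  have hEderiv : ∀ s, HasDerivAt E (α ^ 2 * E s) s := by
    intro s
    have h1 : HasDerivAt (fun s : ℝ => -α ^ 2 * (τ - s)) (α ^ 2) s := by
      have := ((hasDerivAt_id' s).const_sub τ).const_mul (-α ^ 2)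
      exact this.congr_deriv (by ring)
    have h2 := h1.exp
    rwa [mul_comm] at h2
  -- derivatives within Icc 0 1
  have hψderiv : ∀ s ∈ Icc (0:ℝ) 1, HasDerivWithinAt ψ (ψ' s) (Icc 0 1) s := by
    intro s hs
    have hinv : HasDerivWithinAt (fun s => (h' s)⁻¹) (-(h'' s) / (h' s) ^ 2) (Icc 0 1) s :=
      (hh' s hs).inv (hne s hs)
    have hd := (((hEderiv s).hasDerivWithinAt.mul hinv).const_mul ((2 * α)⁻¹))
    exact hd
  have huderiv : ∀ s ∈ Icc (0:ℝ) 1, HasDerivWithinAt u (u' s) (Icc 0 1) s := by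
    intro s hs
    exact (hψderiv s hs).smul (hβ s hs)
  have hgderiv : ∀ s ∈ Icc (0:ℝ) 1, HasDerivWithinAt g (g' s) (Icc 0 1) s := by
    intro s hs
    exact ((hh s hs).const_mul (2 * α ^ 3)).sin
  -- continuity of everything on Icc 0 1
  have hEcont : Continuous E := by fun_prop
  have hψcont : ContinuousOn ψ (Icc 0 1) :=
    continuousOn_const.mul (hEcont.continuousOn.mul hinvcont)
  have hψ'cont : ContinuousOn ψ' (Icc 0 1) := by
    apply continuousOn_const.mul
    apply ContinuousOn.add
    · exact (continuousOn_const.mul hEcont.continuousOn).mul hinvcont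
    · exact hEcont.continuousOn.mul ((hh''c.neg).div (hh'cont.pow 2)
        (fun s hs => pow_ne_zero _ (hne s hs)))
  have hucont : ContinuousOn u (Icc 0 1) := hψcont.smul hβc
  have hu'cont : ContinuousOn u' (Icc 0 1) := (hψcont.smul hβ'c).add (hψ'cont.smul hβc)
  have hgcont : ContinuousOn g (Icc 0 1) :=
    Real.continuous_sin.comp_continuousOn (continuousOn_const.mul hhcont)
  have hg'cont : ContinuousOn g' (Icc 0 1) :=
    (Real.continuous_cos.comp_continuousOn (continuousOn_const.mul hhcont)).mul
      (continuousOn_const.mul hh'cont)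
  -- integrability on [0, τ]
  have huIcc : uIcc (0:ℝ) τ = Icc 0 τ := uIcc_of_le hτ0
  have hint1 : IntervalIntegrable (fun s => g' s • u s) volume 0 τ := by
    apply ContinuousOn.intervalIntegrable
    rw [huIcc]
    exact (hg'cont.smul hucont).mono hsub
  have hint2 : IntervalIntegrable (fun s => g s • u' s) volume 0 τ := by
    apply ContinuousOn.intervalIntegrable
    rw [huIcc]
    exact (hgcont.smul hu'cont).mono hsub
  -- integration by parts via FTC
  have hIBP : ∫ s in (0:ℝ)..τ, (g' s • u s + g s • u' s) = g τ • u τ - g 0 • u 0 := by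
    apply intervalIntegral.integral_eq_sub_of_hasDeriv_right_of_le hτ0
    · exact (hgcont.smul hucont).mono hsub
    · intro x hx
      have hx1 : x ∈ Ioo (0:ℝ) 1 := ⟨hx.1, lt_of_lt_of_le hx.2 hτ1⟩
      have hmem : Icc (0:ℝ) 1 ∈ nhds x := Icc_mem_nhds hx1.1 hx1.2
      have hg1 : HasDerivAt g (g' x) x := (hgderiv x (Ioo_subset_Icc_self hx1)).hasDerivAt hmem
      have hu1 : HasDerivAt u (u' x) x := (huderiv x (Ioo_subset_Icc_self hx1)).hasDerivAt hmem
      have h2 := (hg1.smul hu1).hasDerivWithinAt (s := Ioi x)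
      rwa [add_comm] at h2
    · exact hint1.add hint2
  -- the integrand equals g' • u on [0, τ]
  have hcongr : ∫ s in (0:ℝ)..τ,
      (α ^ 2 * Real.exp (-α ^ 2 * (τ - s)) * (2 * Real.cos (α ^ 3 * h s) ^ 2 - 1)) • β s
      = ∫ s in (0:ℝ)..τ, g' s • u s := by
    apply intervalIntegral.integral_congr
    intro s hs
    rw [huIcc] at hs
    have hs1 : s ∈ Icc (0:ℝ) 1 := hsub hs
    have hcos : 2 * Real.cos (α ^ 3 * h s) ^ 2 - 1 = Real.cos (2 * α ^ 3 * h s) := by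
      rw [show 2 * α ^ 3 * h s = 2 * (α ^ 3 * h s) by ring, Real.cos_two_mul]
    simp only [hudef, hψdef, hg'def, hEdef, smul_smul]
    rw [hcos]
    congr 1
    have h1 : h' s ≠ 0 := hne s hs1
    have h2 : α ≠ 0 := hα0.ne'
    field_simp
  -- split the IBP identity
  have hsplit : ∫ s in (0:ℝ)..τ, g' s • u s
      = g τ • u τ - g 0 • u 0 - ∫ s in (0:ℝ)..τ, g s • u' s := by
    rw [← hIBP, intervalIntegral.integral_add hint1 hint2]
    abel
  -- bounds
  have hg_le : ∀ s, |g s| ≤ 1 := fun s =>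
    abs_le.mpr ⟨Real.neg_one_le_sin _, Real.sin_le_one _⟩
  have hψnonneg : ∀ s ∈ Icc (0:ℝ) 1, 0 ≤ ψ s := by
    intro s hs
    apply mul_nonneg (by positivity)
    exact mul_nonneg (hE0 s).le (inv_nonneg.2 (hpos s hs).le)
  have hψle : ∀ s ∈ Icc (0:ℝ) 1, ψ s ≤ (2 * α)⁻¹ * (E s * c⁻¹) := by
    intro s hs
    apply mul_le_mul_of_nonneg_left _ (by positivity)
    exact mul_le_mul_of_nonneg_left (inv_anti₀ hc (hge s hs)) (hE0 s).le
  have hψ'le : ∀ s ∈ Icc (0:ℝ) 1, |ψ' s| ≤ (2 * α)⁻¹ * (E s * (α ^ 2 * c⁻¹ + M₃)) := by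
    intro s hs
    rw [hψ'def]
    simp only
    rw [abs_mul, abs_of_nonneg (by positivity : (0:ℝ) ≤ (2 * α)⁻¹)]
    apply mul_le_mul_of_nonneg_left _ (by positivity)
    calc |α ^ 2 * E s * (h' s)⁻¹ + E s * (-(h'' s) / (h' s) ^ 2)|
        ≤ |α ^ 2 * E s * (h' s)⁻¹| + |E s * (-(h'' s) / (h' s) ^ 2)| := abs_add_le _ _
      _ ≤ α ^ 2 * E s * c⁻¹ + E s * M₃ := by
          apply add_le_add
          · rw [abs_of_nonneg (mul_nonneg (mul_nonneg (sq_nonneg α) (hE0 s).le)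
              (inv_nonneg.2 (hpos s hs).le))]
            exact mul_le_mul_of_nonneg_left (inv_anti₀ hc (hge s hs))
              (mul_nonneg (sq_nonneg α) (hE0 s).le)
          · rw [abs_mul, abs_of_nonneg (hE0 s).le]
            apply mul_le_mul_of_nonneg_left _ (hE0 s).le
            calc |(-(h'' s)) / (h' s) ^ 2| = |h'' s / (h' s) ^ 2| := by
                  rw [neg_div, abs_neg]
              _ ≤ M₃ := hM₃le s hs
      _ = E s * (α ^ 2 * c⁻¹ + M₃) := by ring
  -- pointwise bound on u'
  set K := (2 * α)⁻¹ * (c⁻¹ * M₂ + (α ^ 2 * c⁻¹ + M₃) * M₁) with hKdef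
  have hu'le : ∀ s ∈ Icc (0:ℝ) 1, ‖u' s‖ ≤ K * E s := by
    intro s hs
    have hb1 : (0:ℝ) ≤ (2 * α)⁻¹ * (E s * c⁻¹) :=
      mul_nonneg (by positivity) (mul_nonneg (hE0 s).le (by positivity))
    calc ‖u' s‖ ≤ ‖ψ s • β' s‖ + ‖ψ' s • β s‖ := norm_add_le _ _
      _ = |ψ s| * ‖β' s‖ + |ψ' s| * ‖β s‖ := by
          rw [norm_smul, norm_smul, Real.norm_eq_abs, Real.norm_eq_abs]
      _ ≤ ((2 * α)⁻¹ * (E s * c⁻¹)) * M₂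
            + ((2 * α)⁻¹ * (E s * (α ^ 2 * c⁻¹ + M₃))) * M₁ := by
          apply add_le_add
          · apply mul_le_mul _ (hM₂le s hs) (norm_nonneg _) hb1
            rw [abs_of_nonneg (hψnonneg s hs)]
            exact hψle s hs
          · exact mul_le_mul (hψ'le s hs) (hM₁le s hs) (norm_nonneg _)
              (mul_nonneg (by positivity) (mul_nonneg (hE0 s).le (by positivity)))
      _ = K * E s := by rw [hKdef]; ring
  have hK0 : 0 ≤ K := by
    rw [hKdef]
    apply mul_nonneg (by positivity)
    apply add_nonneg (mul_nonneg (by positivity) hM₂0)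
    exact mul_nonneg (by positivity) hM₁0
  -- integral of E
  have hEint : ∫ s in (0:ℝ)..τ, E s = (α ^ 2)⁻¹ * (1 - E 0) := by
    have hA : ∀ s ∈ uIcc (0:ℝ) τ, HasDerivAt (fun s => (α ^ 2)⁻¹ * E s) (E s) s := by
      intro s _
      have := (hEderiv s).const_mul ((α ^ 2)⁻¹)
      exact this.congr_deriv (by rw [← mul_assoc, inv_mul_cancel₀ (pow_ne_zero 2 hα0.ne'), one_mul])
    have := intervalIntegral.integral_eq_sub_of_hasDerivAt hA
      (hEcont.intervalIntegrable 0 τ)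
    rw [this, hEτ]
    ring
  -- bound on the integral of g • u'
  have hnorm3 : ‖∫ s in (0:ℝ)..τ, g s • u' s‖ ≤ K * ((α ^ 2)⁻¹ * (1 - E 0)) := by
    have hae : ∀ᵐ t ∂(volume.restrict (Set.uIoc (0:ℝ) τ)), ‖g t • u' t‖ ≤ K * E t := by
      rw [uIoc_of_le hτ0]
      filter_upwards [ae_restrict_mem measurableSet_Ioc] with t ht
      have ht1 : t ∈ Icc (0:ℝ) 1 := ⟨ht.1.le, ht.2.trans hτ1⟩
      rw [norm_smul, Real.norm_eq_abs]
      calc |g t| * ‖u' t‖ ≤ 1 * ‖u' t‖ :=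
            mul_le_mul_of_nonneg_right (hg_le t) (norm_nonneg _)
        _ = ‖u' t‖ := one_mul _
        _ ≤ K * E t := hu'le t ht1
    have hKEint : IntervalIntegrable (fun s => K * E s) volume 0 τ :=
      (continuous_const.mul hEcont).intervalIntegrable 0 τ
    have := intervalIntegral.norm_integral_le_abs_of_norm_le hae hKEint
    calc ‖∫ s in (0:ℝ)..τ, g s • u' s‖ ≤ |∫ s in (0:ℝ)..τ, K * E s| := this
      _ = |K * ((α ^ 2)⁻¹ * (1 - E 0))| := by
          rw [intervalIntegral.integral_const_mul, hEint]
      _ = K * ((α ^ 2)⁻¹ * (1 - E 0)) := by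
          rw [abs_of_nonneg]
          apply mul_nonneg hK0
          apply mul_nonneg (by positivity)
          have := hEle 0 ⟨le_rfl, hτ0⟩
          linarith
  -- boundary bounds
  have hbound : ∀ t ∈ Icc (0:ℝ) 1, ‖g t • u t‖ ≤ (2 * α)⁻¹ * (E t * c⁻¹) * M₁ := by
    intro t ht
    rw [norm_smul, Real.norm_eq_abs, hudef]
    simp only
    rw [norm_smul, Real.norm_eq_abs]
    have hb1 : (0:ℝ) ≤ (2 * α)⁻¹ * (E t * c⁻¹) :=
      mul_nonneg (by positivity) (mul_nonneg (hE0 t).le (by positivity))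
    calc |g t| * (|ψ t| * ‖β t‖) ≤ 1 * (|ψ t| * ‖β t‖) :=
          mul_le_mul_of_nonneg_right (hg_le t) (mul_nonneg (abs_nonneg _) (norm_nonneg _))
      _ = |ψ t| * ‖β t‖ := one_mul _
      _ ≤ ((2 * α)⁻¹ * (E t * c⁻¹)) * M₁ := by
          apply mul_le_mul _ (hM₁le t ht) (norm_nonneg _) hb1
          rw [abs_of_nonneg (hψnonneg t ht)]
          exact hψle t ht
  -- assemble
  have hE00 : 0 < E 0 := hE0 0
  have hE01 : E 0 ≤ 1 := hEle 0 ⟨le_rfl, hτ0⟩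
  have hmain : ‖∫ s in (0:ℝ)..τ,
      (α ^ 2 * Real.exp (-α ^ 2 * (τ - s)) * (2 * Real.cos (α ^ 3 * h s) ^ 2 - 1)) • β s‖
      ≤ (2 * α)⁻¹ * c⁻¹ * M₁ + (2 * α)⁻¹ * (E 0 * c⁻¹) * M₁
        + K * ((α ^ 2)⁻¹ * (1 - E 0)) := by
    rw [hcongr, hsplit]
    calc ‖g τ • u τ - g 0 • u 0 - ∫ s in (0:ℝ)..τ, g s • u' s‖
        ≤ ‖g τ • u τ - g 0 • u 0‖ + ‖∫ s in (0:ℝ)..τ, g s • u' s‖ := norm_sub_le _ _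
      _ ≤ ‖g τ • u τ‖ + ‖g 0 • u 0‖ + ‖∫ s in (0:ℝ)..τ, g s • u' s‖ := by
          have := norm_sub_le (g τ • u τ) (g 0 • u 0)
          linarith
      _ ≤ (2 * α)⁻¹ * c⁻¹ * M₁ + (2 * α)⁻¹ * (E 0 * c⁻¹) * M₁
            + K * ((α ^ 2)⁻¹ * (1 - E 0)) := by
          have h1 := hbound τ ⟨hτ0, hτ1⟩
          rw [hEτ] at h1
          have h2 := hbound 0 (by norm_num)
          have h3 := hnorm3
          have : (2 * α)⁻¹ * (1 * c⁻¹) * M₁ = (2 * α)⁻¹ * c⁻¹ * M₁ := by ring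
          rw [this] at h1
          linarith
  refine hmain.trans ?_
  -- final arithmetic
  rw [hKdef]
  have hainv : α * α⁻¹ = 1 := mul_inv_cancel₀ hα0.ne'
  have hα2 : (1:ℝ) ≤ α ^ 2 := one_le_pow₀ hα
  have hainv1 : α⁻¹ ≤ 1 := by
    rw [inv_le_one_iff₀]; right; exact hα
  have hcinv : (0:ℝ) ≤ c⁻¹ := by positivity
  have key1 : (2 * α)⁻¹ * c⁻¹ * M₁ + (2 * α)⁻¹ * (E 0 * c⁻¹) * M₁
      + ((2 * α)⁻¹ * (c⁻¹ * M₂ + (α ^ 2 * c⁻¹ + M₃) * M₁)) * ((α ^ 2)⁻¹ * (1 - E 0))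
      = α⁻¹ * c⁻¹ * M₁ + (2 * α ^ 3)⁻¹ * (1 - E 0) * (c⁻¹ * M₂ + M₃ * M₁) := by
    field_simp
    ring
  rw [key1]
  have key2 : (2 * α ^ 3)⁻¹ * (1 - E 0) * (c⁻¹ * M₂ + M₃ * M₁)
      ≤ α⁻¹ * (c⁻¹ * M₂ + M₃ * M₁) := by
    apply mul_le_mul_of_nonneg_right _ (add_nonneg (mul_nonneg hcinv hM₂0)
      (mul_nonneg hM₃0 hM₁0))
    calc (2 * α ^ 3)⁻¹ * (1 - E 0) ≤ (2 * α ^ 3)⁻¹ * 1 := by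
          apply mul_le_mul_of_nonneg_left (by linarith) (by positivity)
      _ = (2 * α ^ 3)⁻¹ := mul_one _
      _ ≤ α⁻¹ := by
          apply inv_anti₀ hα0
          nlinarith
  have key3 : α⁻¹ * c⁻¹ * M₁ ≤ (1 / α) * (α ^ 2 * M₁) * c⁻¹ := by
    rw [one_div]
    have : α⁻¹ * c⁻¹ * M₁ = α⁻¹ * (1 * M₁) * c⁻¹ := by ring
    rw [this]
    apply mul_le_mul_of_nonneg_right _ hcinv
    apply mul_le_mul_of_nonneg_left _ (by positivity)
    exact mul_le_mul_of_nonneg_right hα2 hM₁0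
  calc α⁻¹ * c⁻¹ * M₁ + (2 * α ^ 3)⁻¹ * (1 - E 0) * (c⁻¹ * M₂ + M₃ * M₁)
      ≤ (1 / α) * (α ^ 2 * M₁) * c⁻¹ + α⁻¹ * (c⁻¹ * M₂ + M₃ * M₁) :=
        add_le_add key3 key2
    _ = (1 / α) * (α ^ 2 * M₁ + M₂) * c⁻¹ + (1 / α) * M₁ * M₃ := by
        rw [one_div]; ring
end
end

section
/- Let K : ℝⁿ × ℝᵐ → ℝ^{n×m} be bounded and Lipschitz continuous in its first argument with constant Lip, uniformly in the second argument. Let u : [0,1] → ℝᵐ be absolutely continuous with |u̇(s)| ≤ M for a.e. s, let γ, γ̃ ∈ L¹([0,1]; ℝⁿ), and set L = 2·Lip·M. Suppose q, Q : [0,1] → ℝⁿ are absolutely continuous with q(0) = Q(0) = q̄, q̇(s) = K(q(s), u(s)) u̇(s) + γ(s) for a.e. s, and Q̇(s) = K(Q(s), u(s)) u̇(s) + γ̃(s) for a.e. s. Then sup_{t∈[0,1]} |q(t) − Q(t)| ≤ 2 e^L · sup_{τ∈[0,1]} | ∫₀^τ ( γ(s) − γ̃(s) ) ds |. -/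
open MeasureTheory Set

noncomputable section

/-- An absolutely continuous function is continuous on the interval. -/
lemma AbsCont.continuousOn {F : Type*} [NormedAddCommGroup F] [NormedSpace ℝ F]
    {f f' : ℝ → F} (h : AbsCont 0 1 f f') : ContinuousOn f (Icc 0 1) := by
  have hI : IntegrableOn f' (uIcc (0:ℝ) 1) := by
    rw [uIcc_of_le zero_le_one]; exact h.1
  have h1 : ContinuousOn (fun t => f 0 + ∫ s in (0:ℝ)..t, f' s) (Icc 0 1) := by
    have := (continuousOn_const (c := f 0)).add (intervalIntegral.continuousOn_primitive_interval hI)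
    rwa [uIcc_of_le zero_le_one] at this
  exact h1.congr fun t ht => h.2 t ht

/-- Grönwall's inequality in integral form, for a continuous nonnegative function. -/
lemma gronwall_integral_form (ψ : ℝ → ℝ) (hψc : Continuous ψ) (hψ0 : ∀ s, 0 ≤ ψ s)
    (L S : ℝ) (hL : 0 ≤ L) (hS : 0 ≤ S)
    (key : ∀ t ∈ Icc (0:ℝ) 1, ψ t ≤ S + L * ∫ s in (0:ℝ)..t, ψ s) :
    ∀ t ∈ Icc (0:ℝ) 1, ψ t ≤ S * Real.exp (L * t) := by
  set F : ℝ → ℝ := fun x => ∫ s in (0:ℝ)..x, ψ s with hFdef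
  have hFd : ∀ x : ℝ, HasDerivAt F (ψ x) x := fun x =>
    intervalIntegral.integral_hasDerivAt_right (hψc.intervalIntegrable 0 x)
      (hψc.stronglyMeasurable.stronglyMeasurableAtFilter) hψc.continuousAt
  have hGB := norm_le_gronwallBound_of_norm_deriv_right_le (f := F) (f' := ψ)
    (δ := 0) (K := L) (ε := S) (a := 0) (b := 1)
    (fun x _ => (hFd x).continuousAt.continuousWithinAt)
    (fun x _ => (hFd x).hasDerivWithinAt)
    (by simp [hFdef])
    (fun x hx => by
      have h1 := key x (Ico_subset_Icc_self hx)
      have h2 : F x ≤ ‖F x‖ := le_abs_self _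
      have h3 : ‖ψ x‖ = ψ x := abs_of_nonneg (hψ0 x)
      rw [h3]
      nlinarith)
  intro t ht
  have h2 := hGB t ht
  have h3 := key t ht
  have h4 : F t ≤ ‖F t‖ := le_abs_self _
  rcases eq_or_ne L 0 with hL0 | hL0
  · subst hL0
    simpa using h3.trans (by simp)
  · rw [gronwallBound_of_K_ne_0 hL0, sub_zero] at h2
    have h5 : ψ t ≤ S + L * (0 * Real.exp (L * t) + S / L * (Real.exp (L * t) - 1)) := by
      nlinarith
    have h7 : L * (0 * Real.exp (L * t) + S / L * (Real.exp (L * t) - 1))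
        = S * Real.exp (L * t) - S := by field_simp; ring
    linarith [h5, h7.le, h7.ge]

/-- Comparison of two solutions of `ẏ = K(y,u)u̇ + (source)` with sources `γ`, `γ̃`:
`sup |q − Q| ≤ 2 e^L sup_τ |∫₀^τ (γ − γ̃)|`, with `L = 2·Lip·M`. -/
theorem picard_comparison_estimate {n m : ℕ}
    (K : Euc n × Euc m → Euc m →L[ℝ] Euc n)
    (hKcont : Continuous K)
    (MK : ℝ) (hKbdd : ∀ z, ‖K z‖ ≤ MK)
    (Lip M : ℝ)
    (hKlip : ∀ (v : Euc m) (y y' : Euc n), ‖K (y, v) - K (y', v)‖ ≤ Lip * ‖y - y'‖)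
    (u u' : ℝ → Euc m) (hu : AbsCont 0 1 u u')
    (hM : ∀ᵐ s ∂(volume.restrict (Icc (0:ℝ) 1)), ‖u' s‖ ≤ M)
    (γ γt : ℝ → Euc n)
    (hγ : IntegrableOn γ (Icc 0 1)) (hγt : IntegrableOn γt (Icc 0 1))
    (qbar : Euc n) (q Q : ℝ → Euc n)
    (hq : AbsCont 0 1 q (fun s => K (q s, u s) (u' s) + γ s))
    (hQ : AbsCont 0 1 Q (fun s => K (Q s, u s) (u' s) + γt s))
    (hq0 : q 0 = qbar) (hQ0 : Q 0 = qbar) :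
    ∀ t ∈ Icc (0:ℝ) 1, ‖q t - Q t‖ ≤
      2 * Real.exp (2 * Lip * M) *
        ⨆ τ : Icc (0:ℝ) 1, ‖∫ s in (0:ℝ)..(τ:ℝ), (γ s - γt s)‖ := by
  rcases Nat.eq_zero_or_pos n with hn | hn
  · subst hn
    intro t ht
    have hz : q t - Q t = 0 := Subsingleton.elim _ _
    rw [hz, norm_zero]
    exact mul_nonneg (by positivity) (Real.iSup_nonneg fun τ => norm_nonneg _)
  -- `Lip ≥ 0`
  have hLip : 0 ≤ Lip := by
    have h1 := hKlip 0 (EuclideanSpace.single ⟨0, hn⟩ (1:ℝ)) 0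
    rw [sub_zero, EuclideanSpace.norm_single, norm_one, mul_one] at h1
    exact le_trans (norm_nonneg _) h1
  -- `M ≥ 0`
  have hM0 : 0 ≤ M := by
    have hne : volume.restrict (Icc (0:ℝ) 1) ≠ 0 := by
      simp [Measure.restrict_eq_zero, Real.volume_Icc]
    haveI : (ae (volume.restrict (Icc (0:ℝ) 1))).NeBot := ae_neBot.mpr hne
    obtain ⟨s, hs⟩ := hM.exists
    exact le_trans (norm_nonneg _) hs
  have hL0 : 0 ≤ Lip * M := mul_nonneg hLip hM0
  -- abbreviations
  set g : ℝ → Euc n := fun s => K (q s, u s) (u' s) with hgdef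
  set gQ : ℝ → Euc n := fun s => K (Q s, u s) (u' s) with hgQdef
  have hg : IntegrableOn g (Icc 0 1) := by
    have := hq.1.sub hγ
    simpa [hgdef, Pi.sub_def] using this
  have hgQ : IntegrableOn gQ (Icc 0 1) := by
    have := hQ.1.sub hγt
    simpa [hgQdef, Pi.sub_def] using this
  have hsubs : ∀ t ∈ Icc (0:ℝ) 1, uIcc (0:ℝ) t ⊆ Icc 0 1 := fun t ht => by
    rw [uIcc_of_le ht.1]; exact Icc_subset_Icc le_rfl ht.2
  -- the supremum S
  set S : ℝ := ⨆ τ : Icc (0:ℝ) 1, ‖∫ s in (0:ℝ)..(τ:ℝ), (γ s - γt s)‖ with hSdef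
  have hS0 : 0 ≤ S := Real.iSup_nonneg fun τ => norm_nonneg _
  have hEb : ∀ τ ∈ Icc (0:ℝ) 1, ‖∫ s in (0:ℝ)..τ, (γ s - γt s)‖ ≤
      ∫ s in Icc (0:ℝ) 1, ‖γ s - γt s‖ := by
    intro τ hτ
    have h1 : ‖∫ s in (0:ℝ)..τ, (γ s - γt s)‖ ≤ ∫ s in (0:ℝ)..τ, ‖γ s - γt s‖ :=
      intervalIntegral.norm_integral_le_integral_norm hτ.1
    refine h1.trans ?_
    rw [intervalIntegral.integral_of_le hτ.1]
    refine setIntegral_mono_set ((hγ.sub hγt).norm) ?_ ?_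
    · exact Filter.Eventually.of_forall fun s => norm_nonneg _
    · exact HasSubset.Subset.eventuallyLE
        (Ioc_subset_Icc_self.trans (Icc_subset_Icc le_rfl hτ.2))
  have hSbdd : BddAbove (range fun τ : Icc (0:ℝ) 1 =>
      ‖∫ s in (0:ℝ)..(τ:ℝ), (γ s - γt s)‖) := by
    refine ⟨∫ s in Icc (0:ℝ) 1, ‖γ s - γt s‖, ?_⟩
    rintro x ⟨τ, rfl⟩
    exact hEb τ τ.2
  have hES : ∀ t ∈ Icc (0:ℝ) 1, ‖∫ s in (0:ℝ)..t, (γ s - γt s)‖ ≤ S := fun t ht =>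
    le_ciSup hSbdd (⟨t, ht⟩ : Icc (0:ℝ) 1)
  -- continuity of q, Q and the comparison function ψ
  have hqc : ContinuousOn q (Icc 0 1) := hq.continuousOn
  have hQc : ContinuousOn Q (Icc 0 1) := hQ.continuousOn
  have hsub : ContinuousOn (fun s => ‖q s - Q s‖) (Icc (0:ℝ) 1) := (hqc.sub hQc).norm
  set ψ : ℝ → ℝ :=
    fun s => ‖q ((projIcc (0:ℝ) 1 zero_le_one s) : ℝ) - Q ((projIcc (0:ℝ) 1 zero_le_one s) : ℝ)‖
    with hψdef
  have hψc : Continuous ψ := by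
    exact hsub.comp_continuous (continuous_subtype_val.comp continuous_projIcc)
      fun x => (projIcc (0:ℝ) 1 zero_le_one x).2
  have hψeq : ∀ s ∈ Icc (0:ℝ) 1, ψ s = ‖q s - Q s‖ := fun s hs => by
    simp [hψdef, projIcc_of_mem zero_le_one hs]
  have hψ0 : ∀ s, 0 ≤ ψ s := fun s => norm_nonneg _
  -- the key integral inequality
  have key : ∀ t ∈ Icc (0:ℝ) 1, ψ t ≤ S + (Lip * M) * ∫ s in (0:ℝ)..t, ψ s := by
    intro t ht
    have Ig : IntervalIntegrable g volume 0 t := (hg.mono_set (hsubs t ht)).intervalIntegrable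
    have IgQ : IntervalIntegrable gQ volume 0 t := (hgQ.mono_set (hsubs t ht)).intervalIntegrable
    have Iγ : IntervalIntegrable γ volume 0 t := (hγ.mono_set (hsubs t ht)).intervalIntegrable
    have Iγt : IntervalIntegrable γt volume 0 t := (hγt.mono_set (hsubs t ht)).intervalIntegrable
    have hsplit : q t - Q t = (∫ s in (0:ℝ)..t, (g s - gQ s)) + ∫ s in (0:ℝ)..t, (γ s - γt s) := by
      have e0 : q t - Q t = (∫ s in (0:ℝ)..t, (g s + γ s)) - ∫ s in (0:ℝ)..t, (gQ s + γt s) := by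
        rw [hq.2 t ht, hQ.2 t ht, hq0, hQ0]; abel
      rw [e0, ← intervalIntegral.integral_sub (Ig.add Iγ) (IgQ.add Iγt),
        ← intervalIntegral.integral_add (Ig.sub IgQ) (Iγ.sub Iγt)]
      exact intervalIntegral.integral_congr fun s _ => by abel
    -- a.e. bound for the difference of vector fields
    have hsub2 : uIoc (0:ℝ) t ⊆ Icc 0 1 := by
      rw [uIoc_of_le ht.1]
      exact Ioc_subset_Icc_self.trans (Icc_subset_Icc le_rfl ht.2)
    have hmem : ∀ᵐ s ∂(volume.restrict (uIoc (0:ℝ) t)), s ∈ Icc (0:ℝ) 1 :=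
      (ae_restrict_mem measurableSet_uIoc).mono fun s hs => hsub2 hs
    have hM' : ∀ᵐ s ∂(volume.restrict (uIoc (0:ℝ) t)), ‖u' s‖ ≤ M :=
      ae_restrict_of_ae_restrict_of_subset hsub2 hM
    have hae : ∀ᵐ s ∂(volume.restrict (uIoc (0:ℝ) t)), ‖g s - gQ s‖ ≤ (Lip * M) * ψ s := by
      filter_upwards [hmem, hM'] with s hs hMs
      have h1 : g s - gQ s = (K (q s, u s) - K (Q s, u s)) (u' s) := by
        simp [hgdef, hgQdef, ContinuousLinearMap.sub_apply]
      rw [h1, hψeq s hs]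
      calc ‖(K (q s, u s) - K (Q s, u s)) (u' s)‖
          ≤ ‖K (q s, u s) - K (Q s, u s)‖ * ‖u' s‖ :=
            ContinuousLinearMap.le_opNorm _ _
        _ ≤ (Lip * ‖q s - Q s‖) * ‖u' s‖ :=
            mul_le_mul_of_nonneg_right (hKlip (u s) (q s) (Q s)) (norm_nonneg _)
        _ ≤ (Lip * ‖q s - Q s‖) * M :=
            mul_le_mul_of_nonneg_left hMs (mul_nonneg hLip (norm_nonneg _))
        _ = (Lip * M) * ‖q s - Q s‖ := by ring
    have hLψint : IntervalIntegrable (fun s => (Lip * M) * ψ s) volume 0 t :=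
      ((continuous_const.mul hψc)).intervalIntegrable 0 t
    have h2 : ‖∫ s in (0:ℝ)..t, (g s - gQ s)‖ ≤ ∫ s in (0:ℝ)..t, (Lip * M) * ψ s := by
      have := intervalIntegral.norm_integral_le_abs_of_norm_le hae hLψint
      rwa [abs_of_nonneg (intervalIntegral.integral_nonneg ht.1
        fun s _ => mul_nonneg hL0 (hψ0 s))] at this
    rw [hψeq t ht, hsplit]
    calc ‖(∫ s in (0:ℝ)..t, (g s - gQ s)) + ∫ s in (0:ℝ)..t, (γ s - γt s)‖
        ≤ ‖∫ s in (0:ℝ)..t, (g s - gQ s)‖ + ‖∫ s in (0:ℝ)..t, (γ s - γt s)‖ := norm_add_le _ _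
      _ ≤ (∫ s in (0:ℝ)..t, (Lip * M) * ψ s) + S := add_le_add h2 (hES t ht)
      _ = S + (Lip * M) * ∫ s in (0:ℝ)..t, ψ s := by
          rw [intervalIntegral.integral_const_mul]; ring
  -- Grönwall
  have gron := gronwall_integral_form ψ hψc hψ0 (Lip * M) S hL0 hS0 key
  intro t ht
  have h1 := gron t ht
  rw [← hψeq t ht]
  have h2 : Real.exp (Lip * M * t) ≤ Real.exp (2 * Lip * M) :=
    Real.exp_le_exp.mpr (by nlinarith [ht.1, ht.2])
  nlinarith [Real.exp_pos (2 * Lip * M), h1, h2, Real.exp_pos (Lip * M * t)]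
end
end

section
/- Let u : [0,T] → ℝ be continuously differentiable and let q : [0,T] → ℝ solve the Cauchy problem q̇(t) = q(t)² · u̇(t)², q(0) = −1. Then q(t) < 0 for all t ∈ [0,T]. In particular, the function t ↦ t − 1 on [0,1], which satisfies the differential inclusion q̇ ∈ Γ(q) with Γ(q) = [0,∞) for q ≠ 0 and Γ(0) = {0}, cannot coincide with any solution of this Cauchy problem. -/
open Set Filter

noncomputable section

/-- **Example 1.** For any `C¹` control `u`, the solution of `q̇ = q² u̇²`, `q(0) = −1`
stays strictly negative; in particular the trajectory `t ↦ t − 1` of the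
differential inclusion `q̇ ∈ Γ(q)` (with `Γ(q) = [0,∞)` for `q ≠ 0`, `Γ(0) = {0}`)
cannot coincide with any such solution on `[0,1]`. -/
theorem negative_solution_example
    (T : ℝ) (hT : 0 ≤ T)
    (u : ℝ → ℝ) (hu : ContDiff ℝ 1 u)
    (q : ℝ → ℝ)
    (hq : ∀ t ∈ Icc (0:ℝ) T, HasDerivAt q ((q t) ^ 2 * (deriv u t) ^ 2) t)
    (hq0 : q 0 = -1) :
    (∀ t ∈ Icc (0:ℝ) T, q t < 0) ∧
    -- the map `t ↦ t − 1` satisfies the differential inclusion for a.e. `t ∈ [0,1]`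
    (∀ t ∈ Ico (0:ℝ) 1,
      HasDerivAt (fun s : ℝ => s - 1) 1 t ∧
      (1 : ℝ) ∈ (if (t - 1 : ℝ) = 0 then ({0} : Set ℝ) else Ici (0:ℝ))) ∧
    -- but it cannot coincide with `q` on `[0,1]`
    (1 ≤ T → ∃ t ∈ Icc (0:ℝ) 1, q t ≠ t - 1) := by
  have hcu : Continuous (deriv u) := hu.continuous_deriv le_rfl
  obtain ⟨C, hC⟩ : ∃ C, ∀ x ∈ Icc (0:ℝ) T, (deriv u x) ^ 2 ≤ C := by
    obtain ⟨C, hC⟩ := (isCompact_Icc (a := (0:ℝ)) (b := T)).exists_bound_of_continuousOn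
      ((hcu.pow 2).continuousOn)
    exact ⟨C, fun x hx => le_trans (le_abs_self _) (by simpa using hC x hx)⟩
  have hC0 : 0 ≤ C := le_trans (sq_nonneg _) (hC 0 ⟨le_rfl, hT⟩)
  set a : ℝ := -(1 + C * T) with ha
  have haneg : a < 0 := by nlinarith
  have hainv : a⁻¹ < 0 := inv_neg''.mpr haneg
  have hqc : ∀ t ∈ Icc (0:ℝ) T, ContinuousAt q t := fun t ht => (hq t ht).continuousAt
  have hqco : ContinuousOn q (Icc 0 T) := fun t ht => (hqc t ht).continuousWithinAt
  have key : ∀ t ∈ Icc (0:ℝ) T, q t < 0 := by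
    by_contra hcon
    push_neg at hcon
    obtain ⟨t₀, ht₀, ht₀'⟩ := hcon
    set S : Set ℝ := Icc 0 T ∩ q ⁻¹' {0} with hSdef
    have hne : S.Nonempty := by
      have hsub : Icc (q 0) (q t₀) ⊆ q '' Icc 0 t₀ :=
        intermediate_value_Icc ht₀.1 (hqco.mono (Icc_subset_Icc le_rfl ht₀.2))
      have h0m : (0:ℝ) ∈ Icc (q 0) (q t₀) := by rw [hq0]; exact ⟨by linarith, ht₀'⟩
      obtain ⟨z, hz, hz0⟩ := hsub h0m
      exact ⟨z, ⟨⟨hz.1, hz.2.trans ht₀.2⟩, hz0⟩⟩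
    have hclosed : IsClosed S :=
      hqco.preimage_isClosed_of_isClosed isClosed_Icc isClosed_singleton
    have hbdd : BddBelow S := ⟨0, fun x hx => hx.1.1⟩
    set s := sInf S with hsdef
    have hsS : s ∈ S := hclosed.csInf_mem hne hbdd
    have hs0 : q s = 0 := hsS.2
    have hsIcc : s ∈ Icc (0:ℝ) T := hsS.1
    have hspos : 0 < s := by
      rcases lt_or_eq_of_le hsIcc.1 with h | h
      · exact h
      · exfalso; rw [← h, hq0] at hs0; norm_num at hs0
    have hneg : ∀ x ∈ Ico (0:ℝ) s, q x < 0 := by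
      intro x hx
      by_contra hge
      push_neg at hge
      have hxT : x ≤ T := hx.2.le.trans hsIcc.2
      have hsub : Icc (q 0) (q x) ⊆ q '' Icc 0 x :=
        intermediate_value_Icc hx.1 (hqco.mono (Icc_subset_Icc le_rfl hxT))
      have h0m : (0:ℝ) ∈ Icc (q 0) (q x) := by rw [hq0]; exact ⟨by linarith, hge⟩
      obtain ⟨z, hz, hz0⟩ := hsub h0m
      have hzS : z ∈ S := ⟨⟨hz.1, hz.2.trans hxT⟩, hz0⟩
      have := csInf_le hbdd hzS
      have := hz.2
      have := hx.2
      linarith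
    have hbound : ∀ t ∈ Ico (0:ℝ) s, q t ≤ a⁻¹ := by
      intro t ht
      have hsubIcc : Icc (0:ℝ) t ⊆ Icc 0 T :=
        Icc_subset_Icc le_rfl (ht.2.le.trans hsIcc.2)
      have hsubIco : Icc (0:ℝ) t ⊆ Ico 0 s := fun x hx =>
        ⟨hx.1, lt_of_le_of_lt hx.2 ht.2⟩
      have hder : ∀ x ∈ Icc (0:ℝ) t,
          HasDerivWithinAt (fun y => (q y)⁻¹) (-(deriv u x) ^ 2) (Icc 0 t) x := by
        intro x hx
        have hqx : q x ≠ 0 := (hneg x (hsubIco hx)).ne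
        have h1 := (hq x (hsubIcc hx)).inv hqx
        have heq : -((q x) ^ 2 * (deriv u x) ^ 2) / (q x) ^ 2 = -(deriv u x) ^ 2 := by
          field_simp
        rw [heq] at h1
        exact h1.hasDerivWithinAt
      have hCle : ∀ x ∈ Icc (0:ℝ) t, ‖-(deriv u x) ^ 2‖ ≤ C := by
        intro x hx
        rw [norm_neg, Real.norm_eq_abs, abs_of_nonneg (sq_nonneg _)]
        exact hC x (hsubIcc hx)
      have hmvt := (convex_Icc (0:ℝ) t).norm_image_sub_le_of_norm_hasDerivWithin_le
        hder hCle ⟨le_rfl, ht.1⟩ ⟨ht.1, le_rfl⟩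
      rw [hq0] at hmvt
      have hqt : q t < 0 := hneg t ht
      have htT : t ≤ T := ht.2.le.trans hsIcc.2
      have habs : |(q t)⁻¹ - (-1 : ℝ)⁻¹| ≤ C * |t - 0| := by
        simpa [Real.norm_eq_abs] using hmvt
      have h1 : a ≤ (q t)⁻¹ := by
        have h2 := (abs_le.mp habs).1
        have h3 : |t - 0| = t := by rw [sub_zero, abs_of_nonneg ht.1]
        rw [h3] at h2
        have : C * t ≤ C * T := by nlinarith
        simp only [ha]
        nlinarith [h2]
      have hmul : 1 ≤ q t * a := by
        have hinv : q t * (q t)⁻¹ = 1 := mul_inv_cancel₀ hqt.ne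
        nlinarith
      rw [show a⁻¹ = 1 / a by rw [one_div]]
      rw [le_div_iff_of_neg haneg]
      linarith
    have hcl : s ∈ closure (Ico (0:ℝ) s) := by
      rw [closure_Ico hspos.ne]
      exact ⟨hspos.le, le_rfl⟩
    have hnb : (nhdsWithin s (Ico (0:ℝ) s)).NeBot :=
      mem_closure_iff_nhdsWithin_neBot.mp hcl
    have hlim : Tendsto q (nhdsWithin s (Ico (0:ℝ) s)) (nhds (q s)) :=
      ((hqc s hsIcc).tendsto).mono_left nhdsWithin_le_nhds
    have hqs_le : q s ≤ a⁻¹ :=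
      le_of_tendsto hlim (eventually_nhdsWithin_of_forall hbound)
    rw [hs0] at hqs_le
    linarith
  refine ⟨key, ?_, ?_⟩
  · intro t ht
    refine ⟨(hasDerivAt_id t).sub_const 1, ?_⟩
    have : (t - 1 : ℝ) ≠ 0 := by
      have := ht.2; intro h; nlinarith
    rw [if_neg this]
    exact mem_Ici.mpr zero_le_one
  · intro h1T
    refine ⟨1, ⟨zero_le_one, le_rfl⟩, ?_⟩
    have h1 := key 1 ⟨zero_le_one, h1T⟩
    intro he
    rw [he] at h1
    norm_num at h1
end
end

section
/- Let t ↦ G(t) be a differentiable curve of symmetric positive definite (n+m)×(n+m) real matrices, with block decomposition G = [[G₁₁, G₁₂],[G₂₁, G₂₂]] (G₁₁ of size n×n), inverse Ĝ(t) = G(t)⁻¹ with blocks Ĝ₁₁, Ĝ₁₂, Ĝ₂₁, Ĝ₂₂, and set A = (G₁₁)⁻¹, E = (Ĝ₂₂)⁻¹, K = −A G₁₂. Then at every t, for all p ∈ ℝⁿ and v ∈ ℝᵐ, writing η = E v − E Ĝ₂₁ p and denoting d/dt by a prime, the following scalar identity holds: −½ pᵀ Ĝ₁₁' p − pᵀ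 Ĝ₁₂' η − ½ ηᵀ Ĝ₂₂' η = −½ pᵀ A' p − pᵀ K' v + ½ vᵀ E' v. -/
open Matrix

noncomputable section

variable {n m : ℕ}

lemma posDef_toBlocks₁₁ {M : Matrix (Fin n ⊕ Fin m) (Fin n ⊕ Fin m) ℝ} (h : M.PosDef) :
    M.toBlocks₁₁.PosDef := by
  rw [posDef_iff_dotProduct_mulVec]
  constructor
  · have h1 := h.1
    ext i j
    have := congrFun (congrFun h1 (Sum.inl i)) (Sum.inl j)
    simpa [Matrix.conjTranspose_apply, Matrix.toBlocks₁₁] using this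
  · intro x hx
    have hy : (Sum.elim x 0 : Fin n ⊕ Fin m → ℝ) ≠ 0 := by
      intro hc; apply hx; ext i; exact congrFun hc (Sum.inl i)
    have := h.dotProduct_mulVec_pos hy
    convert this using 1
    simp [dotProduct, Matrix.mulVec, Fintype.sum_sum_type, Matrix.toBlocks₁₁]

lemma posDef_toBlocks₂₂ {M : Matrix (Fin n ⊕ Fin m) (Fin n ⊕ Fin m) ℝ} (h : M.PosDef) :
    M.toBlocks₂₂.PosDef := by
  rw [posDef_iff_dotProduct_mulVec]
  constructor
  · have h1 := h.1
    ext i j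
    have := congrFun (congrFun h1 (Sum.inr i)) (Sum.inr j)
    simpa [Matrix.conjTranspose_apply, Matrix.toBlocks₂₂] using this
  · intro x hx
    have hy : (Sum.elim 0 x : Fin n ⊕ Fin m → ℝ) ≠ 0 := by
      intro hc; apply hx; ext i; exact congrFun hc (Sum.inr i)
    have := h.dotProduct_mulVec_pos hy
    convert this using 1
    simp [dotProduct, Matrix.mulVec, Fintype.sum_sum_type, Matrix.toBlocks₂₂]

lemma blocks_mul₁₁ (P Q : Matrix (Fin n ⊕ Fin m) (Fin n ⊕ Fin m) ℝ) :
    (P * Q).toBlocks₁₁ = P.toBlocks₁₁ * Q.toBlocks₁₁ + P.toBlocks₁₂ * Q.toBlocks₂₁ := by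
  ext i j
  simp [Matrix.mul_apply, Fintype.sum_sum_type, Matrix.toBlocks₁₁, Matrix.toBlocks₁₂,
    Matrix.toBlocks₂₁]

lemma blocks_mul₁₂ (P Q : Matrix (Fin n ⊕ Fin m) (Fin n ⊕ Fin m) ℝ) :
    (P * Q).toBlocks₁₂ = P.toBlocks₁₁ * Q.toBlocks₁₂ + P.toBlocks₁₂ * Q.toBlocks₂₂ := by
  ext i j
  simp [Matrix.mul_apply, Fintype.sum_sum_type, Matrix.toBlocks₁₁, Matrix.toBlocks₁₂,
    Matrix.toBlocks₂₂]

lemma toBlocks₁₁_one : (1 : Matrix (Fin n ⊕ Fin m) (Fin n ⊕ Fin m) ℝ).toBlocks₁₁ = 1 := by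
  ext i j
  by_cases h : i = j <;> simp [Matrix.toBlocks₁₁, Matrix.one_apply, h]

lemma toBlocks₁₂_one : (1 : Matrix (Fin n ⊕ Fin m) (Fin n ⊕ Fin m) ℝ).toBlocks₁₂ = 0 := by
  ext i j
  simp [Matrix.toBlocks₁₂, Matrix.one_apply]

lemma transpose_toBlocks₁₂ (P : Matrix (Fin n ⊕ Fin m) (Fin n ⊕ Fin m) ℝ) :
    (Pᵀ).toBlocks₂₁ = (P.toBlocks₁₂)ᵀ := by
  ext i j; rfl

lemma transpose_toBlocks₂₂' (P : Matrix (Fin n ⊕ Fin m) (Fin n ⊕ Fin m) ℝ) :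
    (Pᵀ).toBlocks₂₂ = (P.toBlocks₂₂)ᵀ := by
  ext i j; rfl

variable {M : Matrix (Fin n ⊕ Fin m) (Fin n ⊕ Fin m) ℝ}

lemma pw_hdet (hpos : M.PosDef) : IsUnit M.det := isUnit_iff_ne_zero.mpr hpos.det_pos.ne'

lemma pw_A_mul (hpos : M.PosDef) : ((M.toBlocks₁₁)⁻¹) * M.toBlocks₁₁ = 1 :=
  Matrix.nonsing_inv_mul _ (isUnit_iff_ne_zero.mpr (posDef_toBlocks₁₁ hpos).det_pos.ne')

lemma pw_Hsym (hsym : M.IsSymm) : (M⁻¹)ᵀ = M⁻¹ := by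
  rw [Matrix.transpose_nonsing_inv, show Mᵀ = M from hsym]

lemma pw_Fsym (hsym : M.IsSymm) : ((M⁻¹).toBlocks₂₂)ᵀ = (M⁻¹).toBlocks₂₂ := by
  rw [← transpose_toBlocks₂₂', pw_Hsym hsym]

lemma pw_EF (hpos : M.PosDef) : ((M⁻¹).toBlocks₂₂)⁻¹ * (M⁻¹).toBlocks₂₂ = 1 :=
  Matrix.nonsing_inv_mul _ (isUnit_iff_ne_zero.mpr (posDef_toBlocks₂₂ hpos.inv).det_pos.ne')

lemma pw_FE (hpos : M.PosDef) : (M⁻¹).toBlocks₂₂ * ((M⁻¹).toBlocks₂₂)⁻¹ = 1 :=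
  Matrix.mul_nonsing_inv _ (isUnit_iff_ne_zero.mpr (posDef_toBlocks₂₂ hpos.inv).det_pos.ne')

lemma pw_Esym (hsym : M.IsSymm) : (((M⁻¹).toBlocks₂₂)⁻¹)ᵀ = ((M⁻¹).toBlocks₂₂)⁻¹ := by
  rw [Matrix.transpose_nonsing_inv, pw_Fsym hsym]

lemma pw_H12 (hpos : M.PosDef) :
    (M⁻¹).toBlocks₁₂ = (-(((M.toBlocks₁₁)⁻¹) * M.toBlocks₁₂)) * (M⁻¹).toBlocks₂₂ := by
  have hMH : M * M⁻¹ = 1 := Matrix.mul_nonsing_inv M (pw_hdet hpos)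
  have e6 : M.toBlocks₁₁ * (M⁻¹).toBlocks₁₂ + M.toBlocks₁₂ * (M⁻¹).toBlocks₂₂ = 0 := by
    have := congrArg Matrix.toBlocks₁₂ hMH
    rwa [blocks_mul₁₂, toBlocks₁₂_one] at this
  have e6' : M.toBlocks₁₂ * (M⁻¹).toBlocks₂₂ = -(M.toBlocks₁₁ * (M⁻¹).toBlocks₁₂) :=
    eq_neg_of_add_eq_zero_right e6
  have key : (-(((M.toBlocks₁₁)⁻¹) * M.toBlocks₁₂)) * (M⁻¹).toBlocks₂₂
      = (M⁻¹).toBlocks₁₂ := by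
    rw [Matrix.neg_mul, Matrix.mul_assoc, e6', Matrix.mul_neg, neg_neg, ← Matrix.mul_assoc,
      pw_A_mul hpos, Matrix.one_mul]
  exact key.symm

lemma pw_H21 (hpos : M.PosDef) (hsym : M.IsSymm) :
    (M⁻¹).toBlocks₂₁ = (M⁻¹).toBlocks₂₂ * (-(((M.toBlocks₁₁)⁻¹) * M.toBlocks₁₂))ᵀ := by
  have h : (M⁻¹).toBlocks₂₁ = ((M⁻¹).toBlocks₁₂)ᵀ := by
    rw [← transpose_toBlocks₁₂, pw_Hsym hsym]
  rw [h, pw_H12 hpos, Matrix.transpose_mul, pw_Fsym hsym]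

lemma pw_H11 (hpos : M.PosDef) (hsym : M.IsSymm) :
    (M⁻¹).toBlocks₁₁ = (M.toBlocks₁₁)⁻¹ +
      (-(((M.toBlocks₁₁)⁻¹) * M.toBlocks₁₂)) *
        ((M⁻¹).toBlocks₂₂ * (-(((M.toBlocks₁₁)⁻¹) * M.toBlocks₁₂))ᵀ) := by
  have hMH : M * M⁻¹ = 1 := Matrix.mul_nonsing_inv M (pw_hdet hpos)
  have e5 : M.toBlocks₁₁ * (M⁻¹).toBlocks₁₁ + M.toBlocks₁₂ * (M⁻¹).toBlocks₂₁ = 1 := by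
    have := congrArg Matrix.toBlocks₁₁ hMH
    rwa [blocks_mul₁₁, toBlocks₁₁_one] at this
  have e5' := congrArg (fun X => ((M.toBlocks₁₁)⁻¹) * X) e5
  simp only [Matrix.mul_add, ← Matrix.mul_assoc, pw_A_mul hpos, Matrix.one_mul,
    Matrix.mul_one] at e5'
  have h2 : (M⁻¹).toBlocks₁₁ =
      (M.toBlocks₁₁)⁻¹ + (-(((M.toBlocks₁₁)⁻¹) * M.toBlocks₁₂)) * (M⁻¹).toBlocks₂₁ := by
    rw [Matrix.neg_mul]
    linear_combination (norm := module) e5'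
  rw [h2, pw_H21 hpos hsym, ← Matrix.mul_assoc]
lemma hasDerivAt_matmul {a b c : ℕ} {M : ℝ → Matrix (Fin a) (Fin b) ℝ}
    {N : ℝ → Matrix (Fin b) (Fin c) ℝ} {M' : Matrix (Fin a) (Fin b) ℝ}
    {N' : Matrix (Fin b) (Fin c) ℝ} {t₀ : ℝ}
    (hM : ∀ i j, HasDerivAt (fun t => M t i j) (M' i j) t₀)
    (hN : ∀ i j, HasDerivAt (fun t => N t i j) (N' i j) t₀)
    (i : Fin a) (j : Fin c) :
    HasDerivAt (fun t => (M t * N t) i j) ((M' * N t₀ + M t₀ * N') i j) t₀ := by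
  simp only [Matrix.mul_apply, Matrix.add_apply]
  rw [← Finset.sum_add_distrib]
  exact HasDerivAt.fun_sum fun k _ => (hM i k).mul (hN k j)

lemma dot_symm {k : ℕ} {M : Matrix (Fin k) (Fin k) ℝ} (h : Mᵀ = M) (x y : Fin k → ℝ) :
    x ⬝ᵥ M *ᵥ y = y ⬝ᵥ M *ᵥ x := by
  rw [Matrix.dotProduct_mulVec, ← Matrix.mulVec_transpose, h, dotProduct_comm]

lemma dot_mulVec_left {a b : ℕ} (X : Matrix (Fin a) (Fin b) ℝ) (x : Fin a → ℝ) (y : Fin b → ℝ) :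
    x ⬝ᵥ X *ᵥ y = (Xᵀ *ᵥ x) ⬝ᵥ y := by
  rw [Matrix.dotProduct_mulVec, Matrix.mulVec_transpose]


/-- Derivation of the momentum equation: along a differentiable curve of symmetric
positive definite matrices `G(t)`, with `Ĝ = G⁻¹`, `A = (G₁₁)⁻¹`, `E = (Ĝ₂₂)⁻¹`,
`K = −A G₁₂`, and `η = E v − E Ĝ₂₁ p`, the quadratic forms built from the
derivatives satisfy
`−½ pᵀĜ₁₁'p − pᵀĜ₁₂'η − ½ ηᵀĜ₂₂'η = −½ pᵀA'p − pᵀK'v + ½ vᵀE'v`. -/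
theorem momentum_equation_identity {n m : ℕ}
    (G : ℝ → Matrix (Fin n ⊕ Fin m) (Fin n ⊕ Fin m) ℝ)
    (hpos : ∀ t, (G t).PosDef) (hsymm : ∀ t, (G t).IsSymm)
    (t₀ : ℝ)
    (dH11 dA : Matrix (Fin n) (Fin n) ℝ)
    (dH12 dK : Matrix (Fin n) (Fin m) ℝ)
    (dH22 dE : Matrix (Fin m) (Fin m) ℝ)
    (h11 : ∀ i j, HasDerivAt (fun t => ((G t)⁻¹).toBlocks₁₁ i j) (dH11 i j) t₀)
    (h12 : ∀ i j, HasDerivAt (fun t => ((G t)⁻¹).toBlocks₁₂ i j) (dH12 i j) t₀)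
    (h22 : ∀ i j, HasDerivAt (fun t => ((G t)⁻¹).toBlocks₂₂ i j) (dH22 i j) t₀)
    (hA : ∀ i j, HasDerivAt (fun t => ((G t).toBlocks₁₁)⁻¹ i j) (dA i j) t₀)
    (hK : ∀ i j,
      HasDerivAt (fun t => (-(((G t).toBlocks₁₁)⁻¹ * (G t).toBlocks₁₂)) i j) (dK i j) t₀)
    (hE : ∀ i j, HasDerivAt (fun t => (((G t)⁻¹).toBlocks₂₂)⁻¹ i j) (dE i j) t₀)
    (p : Fin n → ℝ) (v : Fin m → ℝ) :
    let E₀ := (((G t₀)⁻¹).toBlocks₂₂)⁻¹;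
    let η := E₀.mulVec v - (E₀ * ((G t₀)⁻¹).toBlocks₂₁).mulVec p;
    (-(1 / 2) * (p ⬝ᵥ dH11.mulVec p) - p ⬝ᵥ dH12.mulVec η
        - (1 / 2) * (η ⬝ᵥ dH22.mulVec η)
      = -(1 / 2) * (p ⬝ᵥ dA.mulVec p) - p ⬝ᵥ dK.mulVec v
        + (1 / 2) * (v ⬝ᵥ dE.mulVec v)) := by
  intro E₀ η
  set K₀ : Matrix (Fin n) (Fin m) ℝ := -(((G t₀).toBlocks₁₁)⁻¹ * (G t₀).toBlocks₁₂) with hK₀def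
  set F₀ : Matrix (Fin m) (Fin m) ℝ := ((G t₀)⁻¹).toBlocks₂₂ with hF₀def
  have eH12 : ∀ t, ((G t)⁻¹).toBlocks₁₂
      = -(((G t).toBlocks₁₁)⁻¹ * (G t).toBlocks₁₂) * ((G t)⁻¹).toBlocks₂₂ :=
    fun t => pw_H12 (hpos t)
  have eH11 : ∀ t, ((G t)⁻¹).toBlocks₁₁
      = ((G t).toBlocks₁₁)⁻¹ + -(((G t).toBlocks₁₁)⁻¹ * (G t).toBlocks₁₂) *
        (((G t)⁻¹).toBlocks₂₂ * (-(((G t).toBlocks₁₁)⁻¹ * (G t).toBlocks₁₂))ᵀ) :=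
    fun t => pw_H11 (hpos t) (hsymm t)
  have eEF : ∀ t, (((G t)⁻¹).toBlocks₂₂)⁻¹ * ((G t)⁻¹).toBlocks₂₂ = 1 :=
    fun t => pw_EF (hpos t)
  have hKT : ∀ i j, HasDerivAt
      (fun t => (-(((G t).toBlocks₁₁)⁻¹ * (G t).toBlocks₁₂))ᵀ i j) (dKᵀ i j) t₀ :=
    fun i j => by simpa using hK j i
  have R1 : dH12 = dK * F₀ + K₀ * dH22 := by
    ext i j
    have hd := hasDerivAt_matmul hK h22 i j
    have h1 : HasDerivAt (fun t => ((G t)⁻¹).toBlocks₁₂ i j)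
        ((dK * F₀ + K₀ * dH22) i j) t₀ := by
      simpa only [← eH12] using hd
    exact (h12 i j).unique h1
  have R2 : dH11 = dA + (dK * (F₀ * K₀ᵀ) + K₀ * (dH22 * K₀ᵀ + F₀ * dKᵀ)) := by
    ext i j
    have hd := (hA i j).fun_add (hasDerivAt_matmul hK (hasDerivAt_matmul h22 hKT) i j)
    have h1 : HasDerivAt (fun t => ((G t)⁻¹).toBlocks₁₁ i j)
        ((dA + (dK * (F₀ * K₀ᵀ) + K₀ * (dH22 * K₀ᵀ + F₀ * dKᵀ))) i j) t₀ := by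
      simp only [Matrix.add_apply]
      simpa only [← Matrix.add_apply, ← eH11] using hd
    exact (h11 i j).unique h1
  have R3 : dE * F₀ + (F₀⁻¹) * dH22 = 0 := by
    ext i j
    have hd := hasDerivAt_matmul hE h22 i j
    have h1 : HasDerivAt (fun _ : ℝ => (1 : Matrix (Fin m) (Fin m) ℝ) i j)
        ((dE * F₀ + (F₀⁻¹) * dH22) i j) t₀ := by
      simpa only [eEF] using hd
    have := h1.unique (hasDerivAt_const t₀ _)
    simpa using this
  have dEeq : dE = -(F₀⁻¹ * dH22 * F₀⁻¹) := by
    have h1 : dE * F₀ = -(F₀⁻¹ * dH22) := eq_neg_of_add_eq_zero_left R3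
    calc dE = dE * (F₀ * F₀⁻¹) := by rw [pw_FE (hpos t₀), Matrix.mul_one]
      _ = (dE * F₀) * F₀⁻¹ := by rw [Matrix.mul_assoc]
      _ = -(F₀⁻¹ * dH22) * F₀⁻¹ := by rw [h1]
      _ = -(F₀⁻¹ * dH22 * F₀⁻¹) := by rw [Matrix.neg_mul]
  have hd22sym : dH22ᵀ = dH22 := by
    ext i j
    have e : (fun t => ((G t)⁻¹).toBlocks₂₂ j i) = (fun t => ((G t)⁻¹).toBlocks₂₂ i j) := by
      funext t
      have := congrFun (congrFun (pw_Fsym (hsymm t)) j) i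
      simpa [Matrix.transpose_apply] using this.symm
    have h1 := (h22 i j).unique (e ▸ h22 j i)
    simpa [Matrix.transpose_apply] using h1.symm
  have hF₀sym : F₀ᵀ = F₀ := pw_Fsym (hsymm t₀)
  have hE₀sym : (F₀⁻¹)ᵀ = F₀⁻¹ := pw_Esym (hsymm t₀)
  have hηdef : η = F₀⁻¹ *ᵥ v - K₀ᵀ *ᵥ p := by
    show F₀⁻¹ *ᵥ v - (F₀⁻¹ * ((G t₀)⁻¹).toBlocks₂₁) *ᵥ p = _
    rw [pw_H21 (hpos t₀) (hsymm t₀), ← Matrix.mul_assoc, pw_EF (hpos t₀), Matrix.one_mul]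
  have hxv : F₀⁻¹ *ᵥ v = η + K₀ᵀ *ᵥ p := by rw [hηdef, sub_add_cancel]
  have hv : v = F₀ *ᵥ (F₀⁻¹ *ᵥ v) := by
    rw [Matrix.mulVec_mulVec, pw_FE (hpos t₀), Matrix.one_mulVec]
  -- scalar expansions
  have S1 : p ⬝ᵥ dH11 *ᵥ p
      = p ⬝ᵥ dA *ᵥ p + (dKᵀ *ᵥ p ⬝ᵥ F₀ *ᵥ (K₀ᵀ *ᵥ p)
        + (K₀ᵀ *ᵥ p ⬝ᵥ dH22 *ᵥ (K₀ᵀ *ᵥ p) + K₀ᵀ *ᵥ p ⬝ᵥ F₀ *ᵥ (dKᵀ *ᵥ p))) := by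
    rw [R2]
    simp only [Matrix.add_mulVec, Matrix.mulVec_add, dotProduct_add, ← Matrix.mulVec_mulVec]
    rw [dot_mulVec_left dK p, dot_mulVec_left K₀ p, dot_mulVec_left K₀ p]
  have S2 : p ⬝ᵥ dH12 *ᵥ η = dKᵀ *ᵥ p ⬝ᵥ F₀ *ᵥ η + K₀ᵀ *ᵥ p ⬝ᵥ dH22 *ᵥ η := by
    rw [R1]
    simp only [Matrix.add_mulVec, dotProduct_add, ← Matrix.mulVec_mulVec]
    rw [dot_mulVec_left dK p, dot_mulVec_left K₀ p]
  have S3 : v ⬝ᵥ dE *ᵥ v = -((F₀⁻¹ *ᵥ v) ⬝ᵥ dH22 *ᵥ (F₀⁻¹ *ᵥ v)) := by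
    rw [dEeq, Matrix.neg_mulVec, dotProduct_neg]
    rw [← Matrix.mulVec_mulVec, ← Matrix.mulVec_mulVec, dot_mulVec_left (F₀⁻¹) v, hE₀sym]
  have S4 : p ⬝ᵥ dK *ᵥ v = dKᵀ *ᵥ p ⬝ᵥ F₀ *ᵥ η + dKᵀ *ᵥ p ⬝ᵥ F₀ *ᵥ (K₀ᵀ *ᵥ p) := by
    rw [dot_mulVec_left dK p v]
    conv_lhs => rw [hv, hxv]
    rw [Matrix.mulVec_add, dotProduct_add]
  have S5 : (F₀⁻¹ *ᵥ v) ⬝ᵥ dH22 *ᵥ (F₀⁻¹ *ᵥ v)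
      = η ⬝ᵥ dH22 *ᵥ η + 2 * (K₀ᵀ *ᵥ p ⬝ᵥ dH22 *ᵥ η) + K₀ᵀ *ᵥ p ⬝ᵥ dH22 *ᵥ (K₀ᵀ *ᵥ p) := by
    rw [hxv, Matrix.mulVec_add, dotProduct_add, add_dotProduct, add_dotProduct,
      dot_symm hd22sym η (K₀ᵀ *ᵥ p)]
    ring
  have S6 : K₀ᵀ *ᵥ p ⬝ᵥ F₀ *ᵥ (dKᵀ *ᵥ p) = dKᵀ *ᵥ p ⬝ᵥ F₀ *ᵥ (K₀ᵀ *ᵥ p) :=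
    dot_symm hF₀sym _ _
  rw [S1, S2, S3, S4, S5, S6]
  ring
end
end
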